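/- arXiv:math/0501515 — 5 statements merged into one kernel-verified Lean document; each statement's English description precedes it below -/
import Mathlib

section
/- Every filtered λ-ring structure ψ on ℤ[x]/(x²) satisfies ψ_p(x) = b_p x for a unique sequence of integers (b_p) indexed by the primes, and this sequence satisfies b_p ≡ 0 (mod p) for every prime p. Conversely, for any sequence of integers (b_p) with b_p ≡ 0 (mod p) for all primes p, setting ψ_p(x) = b_p x defines a filtered λ-ring structure on ℤ[x]/(x²). Two such structures, given by sequences (b_p) and (b'_p), are isomorphic if and only if b_p = b'_p for all primes p. (Hence isomorphism classes of filtered λ-ring structures on ℤ[x]/(x²) are in bijection with sequences (b_p) with p ∣ b_p for all p.) -/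
open Polynomial

noncomputable section

/-- The truncated polynomial ring `ℤ[x]/(xⁿ)`. -/
abbrev TP (n : ℕ) : Type := Polynomial ℤ ⧸ Ideal.span {(X : Polynomial ℤ) ^ n}

/-- The class of `x` in `ℤ[x]/(xⁿ)`. -/
def xx (n : ℕ) : TP n := Ideal.Quotient.mk _ (X : Polynomial ℤ)

/-- A filtered λ-ring structure on `ℤ[x]/(xⁿ)`, presented (via Wilkerson's theorem) as a
family of Adams operations `ψ p`, indexed by the primes `p`: each `ψ p` is a ring
endomorphism preserving the filtration ideal `(x)`, they pairwise commute, and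
`ψ p r ≡ r ^ p (mod p)`. -/
structure AdamsFamily (n : ℕ) : Type where
  ψ : Nat.Primes → (TP n →+* TP n)
  maps_ideal : ∀ (p : Nat.Primes), ∀ a ∈ Ideal.span {xx n}, ψ p a ∈ Ideal.span {xx n}
  comm : ∀ p q : Nat.Primes, (ψ p).comp (ψ q) = (ψ q).comp (ψ p)
  frob : ∀ (p : Nat.Primes) (a : TP n),
    ψ p a - a ^ (p : ℕ) ∈ Ideal.span {((p : ℕ) : TP n)}

/-- Isomorphism of filtered λ-ring structures on `ℤ[x]/(xⁿ)`: a filtration-preserving ring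
automorphism intertwining the Adams operations. -/
def AdamsIso {n : ℕ} (R S : AdamsFamily n) : Prop :=
  ∃ σ : TP n ≃+* TP n,
    (Ideal.span {xx n}).map σ.toRingHom = Ideal.span {xx n} ∧
    ∀ p : Nat.Primes, σ.toRingHom.comp (R.ψ p) = (S.ψ p).comp σ.toRingHom

/-- The prime 2 as an element of `Nat.Primes`. -/
def P2 : Nat.Primes := ⟨2, Nat.prime_two⟩

/-- The prime 3 as an element of `Nat.Primes`. -/
def P3 : Nat.Primes := ⟨3, Nat.prime_three⟩

lemma xsq : (xx 2) ^ 2 = 0 := by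
  rw [xx, ← map_pow, Ideal.Quotient.eq_zero_iff_mem]
  exact Ideal.subset_span rfl

lemma coeff_int_one (i : ℤ) : (i : Polynomial ℤ).coeff 1 = 0 := by
  rw [← C_eq_intCast, coeff_C]; simp

lemma repr_unique (c d : ℤ) (h : (c : TP 2) + (d : TP 2) * xx 2 = 0) : c = 0 ∧ d = 0 := by
  have h2 : (Ideal.Quotient.mk (Ideal.span {(X : Polynomial ℤ) ^ 2})) (C c + C d * X) = 0 := by
    rw [map_add, map_mul]
    simpa [xx] using h
  rw [Ideal.Quotient.eq_zero_iff_mem, Ideal.mem_span_singleton, X_pow_dvd_iff] at h2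
  have h0 := h2 0 (by norm_num)
  have h1 := h2 1 (by norm_num)
  simp [intCast_coeff_zero, coeff_int_one] at h0 h1
  exact ⟨h0, h1⟩

lemma repr_exists (a : TP 2) : ∃ c d : ℤ, a = (c : TP 2) + (d : TP 2) * xx 2 := by
  obtain ⟨f, rfl⟩ := Ideal.Quotient.mk_surjective a
  refine ⟨f.coeff 0, f.coeff 1, ?_⟩
  have : (Ideal.Quotient.mk (Ideal.span {(X : Polynomial ℤ) ^ 2}))
      (f - (C (f.coeff 0) + C (f.coeff 1) * X)) = 0 := by
    rw [Ideal.Quotient.eq_zero_iff_mem, Ideal.mem_span_singleton, X_pow_dvd_iff]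
    intro i hi
    interval_cases i <;> simp [intCast_coeff_zero, coeff_int_one, coeff_C]
  rw [map_sub, sub_eq_zero] at this
  rw [this, map_add, map_mul, xx]
  simp

lemma hom_ext {S : Type*} [CommRing S] (f g : TP 2 →+* S) (h : f (xx 2) = g (xx 2)) :
    f = g := by
  refine Ideal.Quotient.ringHom_ext (Polynomial.ringHom_ext (fun a => ?_) ?_)
  · simp only [RingHom.comp_apply]
    rw [show (C a : Polynomial ℤ) = ((a : ℤ) : Polynomial ℤ) from C_eq_intCast a]
    simp only [map_intCast]
  · simpa [xx, RingHom.comp_apply] using h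

def psiOf (b : ℤ) : TP 2 →+* TP 2 :=
  Ideal.Quotient.lift _ ((aeval ((b : TP 2) * xx 2)).toRingHom) (by
    intro a ha
    rw [Ideal.mem_span_singleton] at ha
    obtain ⟨c, rfl⟩ := ha
    simp only [AlgHom.toRingHom_eq_coe, RingHom.coe_coe, map_mul, map_pow, aeval_X]
    rw [mul_pow, xsq]
    ring)

lemma psiOf_x (b : ℤ) : psiOf b (xx 2) = (b : TP 2) * xx 2 := by
  simp [psiOf, xx]

lemma pow_add_of_sq_zero {R : Type*} [CommRing R] (u v : R) (hv : v ^ 2 = 0) :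
    ∀ n : ℕ, 1 ≤ n → (u + v) ^ n = u ^ n + (n : R) * u ^ (n - 1) * v := by
  intro n hn
  induction n with
  | zero => omega
  | succ m ih =>
    rcases Nat.eq_or_lt_of_le hn with h1 | h1
    · simp [← h1]
    · have hm : 1 ≤ m := by omega
      have hv' : v * v = 0 := by rw [← sq]; exact hv
      obtain ⟨k, rfl⟩ : ∃ k, m = k + 1 := ⟨m - 1, by omega⟩
      rw [pow_succ, ih hm]
      simp only [Nat.add_sub_cancel]
      have key : (u ^ (k + 1) + ((k : R) + 1) * u ^ k * v) * (u + v)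
          = u ^ (k + 2) + (((k : R) + 1) + 1) * u ^ (k + 1) * v + ((k : R) + 1) * (u ^ k * (v * v)) := by
        ring
      push_cast
      rw [key, hv']
      ring

lemma smul_x_inj {c d : ℤ} (h : (c : TP 2) * xx 2 = (d : TP 2) * xx 2) : c = d := by
  have h0 : ((0 : ℤ) : TP 2) + ((c - d : ℤ) : TP 2) * xx 2 = 0 := by
    push_cast; linear_combination h
  have := (repr_unique 0 (c - d) h0).2
  omega

lemma fermat (p : Nat.Primes) (c : ℤ) : ((p : ℕ) : ℤ) ∣ c ^ (p : ℕ) - c := by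
  haveI := Fact.mk p.prop
  rw [← ZMod.intCast_zmod_eq_zero_iff_dvd]
  push_cast
  rw [ZMod.pow_card]
  ring

lemma x_pow_zero (p : Nat.Primes) : (xx 2) ^ (p : ℕ) = 0 := by
  rw [show (p : ℕ) = 2 + ((p : ℕ) - 2) by have := p.prop.two_le; omega, pow_add, xsq, zero_mul]

-- Part A
theorem partA (R : AdamsFamily 2) : ∃! b : Nat.Primes → ℤ,
    ∀ p : Nat.Primes, R.ψ p (xx 2) = (b p : TP 2) * xx 2 := by
  have exc : ∀ p : Nat.Primes, ∃ c : ℤ, R.ψ p (xx 2) = (c : TP 2) * xx 2 := by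
    intro p
    have hmem := R.maps_ideal p (xx 2) (Ideal.mem_span_singleton_self _)
    rw [Ideal.mem_span_singleton] at hmem
    obtain ⟨t, ht⟩ := hmem
    obtain ⟨c, d, rfl⟩ := repr_exists t
    exact ⟨c, by rw [ht]; linear_combination ((d : TP 2)) * xsq⟩
  refine ⟨fun p => (exc p).choose, fun p => (exc p).choose_spec, ?_⟩
  intro b' hb'
  funext p
  apply smul_x_inj
  rw [← hb' p]
  exact (exc p).choose_spec

-- Part B
theorem partB (R : AdamsFamily 2) (b : Nat.Primes → ℤ)
    (hb : ∀ p : Nat.Primes, R.ψ p (xx 2) = (b p : TP 2) * xx 2) :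
    ∀ p : Nat.Primes, ((p : ℕ) : ℤ) ∣ b p := by
  intro p
  have h := R.frob p (xx 2)
  rw [hb p, x_pow_zero, sub_zero, Ideal.mem_span_singleton] at h
  obtain ⟨t, ht⟩ := h
  obtain ⟨c, d, rfl⟩ := repr_exists t
  have h0 : (((p : ℕ) * c : ℤ) : TP 2) + ((((p : ℕ) : ℤ) * d - b p : ℤ) : TP 2) * xx 2 = 0 := by
    push_cast
    linear_combination -ht
  have := (repr_unique _ _ h0).2
  exact ⟨d, by omega⟩

-- Part C
theorem partC (b : Nat.Primes → ℤ) (hb : ∀ p : Nat.Primes, ((p : ℕ) : ℤ) ∣ b p) :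
    ∃ S : AdamsFamily 2, ∀ p : Nat.Primes, S.ψ p (xx 2) = (b p : TP 2) * xx 2 := by
  refine ⟨⟨fun p => psiOf (b p), ?_, ?_, ?_⟩, fun p => psiOf_x (b p)⟩
  · intro p a ha
    rw [Ideal.mem_span_singleton] at ha ⊢
    obtain ⟨t, rfl⟩ := ha
    exact ⟨(b p : TP 2) * psiOf (b p) t, by rw [map_mul, psiOf_x]; ring⟩
  · intro p q
    apply hom_ext
    simp only [RingHom.comp_apply, psiOf_x, map_mul, map_intCast]
    ring
  · intro p a
    obtain ⟨c, d, rfl⟩ := repr_exists a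
    have h1 : psiOf (b p) ((c : TP 2) + (d : TP 2) * xx 2)
        = (c : TP 2) + (d : TP 2) * ((b p : TP 2) * xx 2) := by
      rw [map_add, map_mul, map_intCast, map_intCast, psiOf_x]
    have hx2 : ((d : TP 2) * xx 2) ^ 2 = 0 := by rw [mul_pow, xsq, mul_zero]
    have h2 := pow_add_of_sq_zero (c : TP 2) ((d : TP 2) * xx 2) hx2 (p : ℕ) p.prop.one_lt.le
    obtain ⟨e, he⟩ := fermat p c
    obtain ⟨k, hk⟩ := hb p
    rw [Ideal.mem_span_singleton]
    refine ⟨(-(e : TP 2)) + ((d * k - c ^ ((p : ℕ) - 1) * d : ℤ) : TP 2) * xx 2, ?_⟩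
    rw [h1, h2]
    have he' : (c : TP 2) ^ (p : ℕ) - (c : TP 2) = ((p : ℕ) : TP 2) * (e : TP 2) := by
      have := congrArg (fun z : ℤ => (z : TP 2)) he
      push_cast at this
      exact this
    have hk' : ((b p : ℤ) : TP 2) = ((p : ℕ) : TP 2) * (k : TP 2) := by
      have := congrArg (fun z : ℤ => (z : TP 2)) hk
      push_cast at this
      exact this
    push_cast
    linear_combination (-1 : TP 2) * he' + (d : TP 2) * xx 2 * hk'

-- σ must send x to d*x with d invertible-ish; key: constant term of σ x is 0
lemma sigma_x (σ : TP 2 ≃+* TP 2) : ∃ d : ℤ, σ (xx 2) = (d : TP 2) * xx 2 := by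
  obtain ⟨c, d, hcd⟩ := repr_exists (σ (xx 2))
  have hsq : (σ (xx 2)) ^ 2 = 0 := by rw [← map_pow, xsq, map_zero]
  rw [hcd] at hsq
  have h0 : ((c ^ 2 : ℤ) : TP 2) + ((2 * c * d : ℤ) : TP 2) * xx 2 = 0 := by
    push_cast
    linear_combination hsq - (d : TP 2) ^ 2 * xsq
  have hc : c = 0 := by
    have := (repr_unique _ _ h0).1
    nlinarith [this]
  refine ⟨d, ?_⟩
  rw [hcd, hc]
  push_cast
  ring

theorem partD (R S : AdamsFamily 2) (b b' : Nat.Primes → ℤ)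
    (hb : ∀ p : Nat.Primes, R.ψ p (xx 2) = (b p : TP 2) * xx 2)
    (hb' : ∀ p : Nat.Primes, S.ψ p (xx 2) = (b' p : TP 2) * xx 2) :
    AdamsIso R S ↔ ∀ p : Nat.Primes, b p = b' p := by
  constructor
  · rintro ⟨σ, hI, hcomm⟩ p
    obtain ⟨d, hd⟩ := sigma_x σ
    obtain ⟨f, hf⟩ := sigma_x σ.symm
    have hdf : f * d = 1 := by
      apply smul_x_inj
      have : σ.symm (σ (xx 2)) = xx 2 := σ.symm_apply_apply _
      rw [hd, map_mul, map_intCast, hf] at this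
      push_cast
      linear_combination this
    have hdd : d ≠ 0 := by rintro rfl; simp at hdf
    have key := RingHom.congr_fun (hcomm p) (xx 2)
    simp only [RingHom.comp_apply, RingEquiv.toRingHom_eq_coe, RingHom.coe_coe] at key
    rw [hb p, hd, map_mul, map_mul, map_intCast, map_intCast, hd, hb' p] at key
    have : b p * d = b' p * d := by
      apply smul_x_inj
      push_cast
      linear_combination key
    exact mul_right_cancel₀ hdd this
  · intro hbb
    refine ⟨RingEquiv.refl _, ?_, ?_⟩
    · simp [Ideal.map_id]
    · intro p
      have : R.ψ p = S.ψ p := by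
        apply hom_ext
        rw [hb p, hb' p, hbb p]
      simp [this]

theorem stmt1 :
    (∀ R : AdamsFamily 2, ∃! b : Nat.Primes → ℤ,
        ∀ p : Nat.Primes, R.ψ p (xx 2) = (b p : TP 2) * xx 2) ∧
    (∀ (R : AdamsFamily 2) (b : Nat.Primes → ℤ),
        (∀ p : Nat.Primes, R.ψ p (xx 2) = (b p : TP 2) * xx 2) →
        ∀ p : Nat.Primes, ((p : ℕ) : ℤ) ∣ b p) ∧
    (∀ b : Nat.Primes → ℤ, (∀ p : Nat.Primes, ((p : ℕ) : ℤ) ∣ b p) →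
        ∃ S : AdamsFamily 2, ∀ p : Nat.Primes, S.ψ p (xx 2) = (b p : TP 2) * xx 2) ∧
    (∀ (R S : AdamsFamily 2) (b b' : Nat.Primes → ℤ),
        (∀ p : Nat.Primes, R.ψ p (xx 2) = (b p : TP 2) * xx 2) →
        (∀ p : Nat.Primes, S.ψ p (xx 2) = (b' p : TP 2) * xx 2) →
        (AdamsIso R S ↔ ∀ p : Nat.Primes, b p = b' p)) :=
  ⟨partA, partB, partC, partD⟩
end
end

section
/- Let (b_p) and (c_p) be sequences of integers indexed by the primes satisfying: (1) b_p ≡ 0 (mod p) for all primes p; (2) c₂ ≡ 1 (mod 2) and c_p ≡ 0 (mod p) for all primes p > 2; (3) (b_q² − b_q)·c_p = (b_p² − b_p)·c_q for all primes p and q. If b₂ ≠ 0, then b_p(b_p − 1) ≡ 0 (mod 2^{θ₂(b₂)}) for every odd prime p. If b₂ = 0, then b_p = 0 for every odd prime p. -/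
open Polynomial

noncomputable section

theorem stmt3 (b c : Nat.Primes → ℤ)
    (h1 : ∀ p : Nat.Primes, ((p : ℕ) : ℤ) ∣ b p)
    (h2 : Int.ModEq 2 (c P2) 1)
    (h2' : ∀ p : Nat.Primes, 2 < (p : ℕ) → ((p : ℕ) : ℤ) ∣ c p)
    (h3 : ∀ p q : Nat.Primes, (b q ^ 2 - b q) * c p = (b p ^ 2 - b p) * c q) :
    (b P2 ≠ 0 → ∀ p : Nat.Primes, 2 < (p : ℕ) →
        (2 : ℤ) ^ padicValInt 2 (b P2) ∣ b p * (b p - 1)) ∧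
    (b P2 = 0 → ∀ p : Nat.Primes, 2 < (p : ℕ) → b p = 0) := by
  constructor
  · intro hb2 p hp
    have key := h3 P2 p
    -- (b p ^2 - b p) * c P2 = (b P2 ^2 - b P2) * c p
    have hdvd : (2 : ℤ) ^ padicValInt 2 (b P2) ∣ (b p ^ 2 - b p) * c P2 := by
      rw [key]
      have : (2 : ℤ) ^ padicValInt 2 (b P2) ∣ b P2 :=
        @padicValInt_dvd 2 (b P2)
      exact Dvd.dvd.mul_right (dvd_sub (by rw [sq]; exact this.mul_right _) this) _
    obtain ⟨k, hk⟩ := Int.ModEq.dvd h2.symm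
    have hodd : IsCoprime ((2:ℤ) ^ padicValInt 2 (b P2)) (c P2) :=
      IsCoprime.pow_left ⟨-k, 1, by linarith⟩
    have h4 := hodd.dvd_of_dvd_mul_right hdvd
    have : b p ^ 2 - b p = b p * (b p - 1) := by ring
    rwa [this] at h4
  · intro hb2 p hp
    have key := h3 P2 p
    rw [hb2] at key
    simp at key
    -- key : (b p ^ 2 - b p) * c P2 = 0
    have hc : c P2 ≠ 0 := by
      intro h; rw [h] at h2; exact absurd h2 (by decide)
    have h0 : b p ^ 2 - b p = 0 := key.resolve_right hc
    have : b p = 0 ∨ b p = 1 := by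
      have hm : b p * (b p - 1) = 0 := by nlinarith [h0]
      rcases mul_eq_zero.mp hm with h | h
      · exact Or.inl h
      · exact Or.inr (by linarith)
    rcases this with h | h
    · exact h
    · exfalso
      have := h1 p
      rw [h] at this
      have := Int.le_of_dvd one_pos this
      omega
end
end

section
/- Let S and S̄ be filtered λ-ring structures on ℤ[x]/(x³) with Adams operations ψ_p^S(x) = b_p x + c_p x² and ψ_p^{S̄}(x) = b̄_p x + c̄_p x² (p ranging over the primes). Then S and S̄ are isomorphic if and only if the following two conditions hold simultaneously: (1) b_p = b̄_p for all primes p; (2)(a) if b₂ = b̄₂ = 0, then there exists u ∈ {1, −1} such that c_p = u·c̄_p for all primes p, while (2)(b) if b₂ = b̄₂ ≠ 0, then there exist u ∈ {1, −1} and an integer a such that a·b₂(b₂ − 1) = c₂ − u·c̄₂. -/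
open Polynomial

noncomputable section

abbrev mk3 : Polynomial ℤ →+* TP 3 := Ideal.Quotient.mk _

lemma coeff_int (a : ℤ) (i : ℕ) : ((a : ℤ[X])).coeff i = if i = 0 then a else 0 := by
  rw [(C_eq_intCast a).symm, coeff_C]; simp

lemma mk3_int (a : ℤ) : mk3 (C a) = (a : TP 3) := by
  have h : (C a : ℤ[X]) = (a : ℤ[X]) := by norm_cast
  rw [h, map_intCast]

lemma xx3_def : xx 3 = mk3 X := rfl

lemma xx3_pow3 : (xx 3) ^ 3 = 0 := by
  rw [xx3_def, ← map_pow]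
  exact Ideal.Quotient.eq_zero_iff_mem.2 (Ideal.subset_span rfl)

lemma coeff_zero_of_dvd {P : Polynomial ℤ} (h : (X : Polynomial ℤ)^3 ∣ P) {i : ℕ} (hi : i < 3) :
    P.coeff i = 0 := by
  obtain ⟨q, rfl⟩ := h
  rw [mul_comm, coeff_mul_X_pow']
  simp [Nat.not_le.mpr hi]

lemma mk3_eq {P Q : Polynomial ℤ} (h : mk3 P = mk3 Q) : (X : Polynomial ℤ)^3 ∣ (P - Q) := by
  rw [Ideal.Quotient.eq] at h
  exact (Ideal.mem_span_singleton).1 h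

lemma tri_eq {a b c a' b' c' : ℤ}
    (h : (a : TP 3) + (b : TP 3) * xx 3 + (c : TP 3) * xx 3 ^ 2
       = (a' : TP 3) + (b' : TP 3) * xx 3 + (c' : TP 3) * xx 3 ^ 2) :
    a = a' ∧ b = b' ∧ c = c' := by
  have h' : mk3 (C a + C b * X + C c * X ^ 2) = mk3 (C a' + C b' * X + C c' * X ^ 2) := by
    simp only [map_add, map_mul, map_pow, mk3_int, ← xx3_def]
    exact h
  have hd := mk3_eq h'
  have h0 := coeff_zero_of_dvd hd (by norm_num : (0:ℕ) < 3)
  have h1 := coeff_zero_of_dvd hd (by norm_num : (1:ℕ) < 3)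
  have h2 := coeff_zero_of_dvd hd (by norm_num : (2:ℕ) < 3)
  simp [coeff_sub, coeff_add, coeff_int, coeff_C, coeff_C_mul, coeff_X_pow, sub_eq_zero] at h0 h1 h2
  exact ⟨h0, h1, h2⟩

lemma repr3 (z : TP 3) : ∃ a b c : ℤ, z = (a : TP 3) + (b : TP 3) * xx 3 + (c : TP 3) * xx 3 ^ 2 := by
  obtain ⟨P, rfl⟩ := Ideal.Quotient.mk_surjective z
  set r := P %ₘ (X ^ 3) with hr
  have hmonic : (X ^ 3 : Polynomial ℤ).Monic := monic_X_pow 3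
  have hPr : mk3 P = mk3 r := by
    rw [Ideal.Quotient.eq, ← modByMonic_add_div P (X ^ 3)]
    rw [Ideal.mem_span_singleton]
    exact ⟨P /ₘ X ^ 3, by ring⟩
  have hdeg : r.degree < 3 := by
    simpa using degree_modByMonic_lt P hmonic
  have : r = C (r.coeff 0) + C (r.coeff 1) * X + C (r.coeff 2) * X ^ 2 := by
    ext i
    rcases i with _ | _ | _ | i
    · simp [coeff_int, coeff_C, coeff_X_pow]
    · simp [coeff_int, coeff_C, coeff_X_pow]
    · simp [coeff_int, coeff_C, coeff_X_pow]
    · have : r.coeff (i+3) = 0 := coeff_eq_zero_of_degree_lt (lt_of_lt_of_le hdeg (by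
        exact_mod_cast Nat.le_add_left 3 i))
      simp [this, coeff_int, coeff_C, coeff_X_pow]
  obtain ⟨a0, b0, c0, habc⟩ : ∃ a b c : ℤ, r = C a + C b * X + C c * X ^ 2 :=
    ⟨_, _, _, this⟩
  refine ⟨a0, b0, c0, ?_⟩
  show mk3 P = _
  rw [hPr, habc]
  simp only [map_add, map_mul, map_pow, mk3_int, ← xx3_def]

lemma xx3_pow4 : (xx 3) ^ 4 = 0 := by
  rw [show (4:ℕ) = 3 + 1 from rfl, pow_succ, xx3_pow3, zero_mul]

lemma tri_mod {n B c : ℤ}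
    (h : (B : TP 3) * xx 3 + (c : TP 3) * xx 3 ^ 2 ∈ Ideal.span {((n : ℤ) : TP 3)}) :
    n ∣ B ∧ n ∣ c := by
  obtain ⟨t, ht⟩ := Ideal.mem_span_singleton.1 h
  obtain ⟨T, rfl⟩ := Ideal.Quotient.mk_surjective t
  have h0 : mk3 (C B * X + C c * X ^ 2) = mk3 (C n * T) := by
    simp only [map_add, map_mul, map_pow, mk3_int, ← xx3_def]
    rw [ht]
  have hd := mk3_eq h0
  have h1 := coeff_zero_of_dvd hd (by norm_num : (1:ℕ) < 3)
  have h2 := coeff_zero_of_dvd hd (by norm_num : (2:ℕ) < 3)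
  simp only [coeff_sub, coeff_add, coeff_C_mul, coeff_X, coeff_X_pow, mul_one,
    sub_eq_zero] at h1 h2
  norm_num at h1 h2
  exact ⟨⟨T.coeff 1, h1⟩, ⟨T.coeff 2, h2⟩⟩

lemma tp3_ext {f g : TP 3 →+* TP 3} (h : f (xx 3) = g (xx 3)) : f = g := by
  apply Ideal.Quotient.ringHom_ext
  apply Polynomial.ringHom_ext
  · intro a
    simp only [RingHom.comp_apply]
    rw [show (Ideal.Quotient.mk (Ideal.span {(X : Polynomial ℤ)^3})) (C a) = ((a : ℤ) : TP 3)
        from mk3_int a, map_intCast, map_intCast]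
  · simp only [RingHom.comp_apply]; exact h

def endo (t : TP 3) (h3 : t ^ 3 = 0) : TP 3 →+* TP 3 :=
  Ideal.Quotient.lift _ (aeval t).toRingHom (fun a ha => by
    obtain ⟨q, rfl⟩ := Ideal.mem_span_singleton.1 ha
    simp [map_mul, map_pow, h3])

lemma endo_x (t : TP 3) (h3 : t ^ 3 = 0) : endo t h3 (xx 3) = t := by
  unfold endo xx
  rw [Ideal.Quotient.lift_mk]
  simp

lemma cube_tri (A B : ℤ) : ((A : TP 3) * xx 3 + (B : TP 3) * xx 3 ^ 2) ^ 3 = 0 := by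
  calc ((A : TP 3) * xx 3 + (B : TP 3) * xx 3 ^ 2) ^ 3
      = xx 3 ^ 3 * ((A : TP 3) + (B : TP 3) * xx 3) ^ 3 := by ring
    _ = 0 := by rw [xx3_pow3, zero_mul]

lemma sq_tri (A B : ℤ) : ((A : TP 3) * xx 3 + (B : TP 3) * xx 3 ^ 2) ^ 2
    = ((A ^ 2 : ℤ) : TP 3) * xx 3 ^ 2 := by
  calc ((A : TP 3) * xx 3 + (B : TP 3) * xx 3 ^ 2) ^ 2
      = ((A ^ 2 : ℤ) : TP 3) * xx 3 ^ 2
        + xx 3 ^ 3 * (2 * (A : TP 3) * B + (B : TP 3) ^ 2 * xx 3) := by push_cast; ring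
    _ = _ := by rw [xx3_pow3]; ring

lemma hom_tri (f : TP 3 →+* TP 3) (A B : ℤ) :
    f ((A : TP 3) * xx 3 + (B : TP 3) * xx 3 ^ 2)
      = (A : TP 3) * f (xx 3) + (B : TP 3) * (f (xx 3)) ^ 2 := by
  rw [map_add, map_mul, map_mul, map_pow, map_intCast, map_intCast]

lemma x_mul_tri (a0 a1 a2 : ℤ) :
    xx 3 * ((a0 : TP 3) + (a1 : TP 3) * xx 3 + (a2 : TP 3) * xx 3 ^ 2)
      = ((0 : ℤ) : TP 3) + (a0 : TP 3) * xx 3 + (a1 : TP 3) * xx 3 ^ 2 := by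
  calc xx 3 * ((a0 : TP 3) + (a1 : TP 3) * xx 3 + (a2 : TP 3) * xx 3 ^ 2)
      = ((0 : ℤ) : TP 3) + (a0 : TP 3) * xx 3 + (a1 : TP 3) * xx 3 ^ 2
        + xx 3 ^ 3 * (a2 : TP 3) := by push_cast; ring
    _ = _ := by rw [xx3_pow3]; ring

lemma mul_tri (A B a0 a1 a2 : ℤ) :
    ((A : TP 3) * xx 3 + (B : TP 3) * xx 3 ^ 2)
        * ((a0 : TP 3) + (a1 : TP 3) * xx 3 + (a2 : TP 3) * xx 3 ^ 2)
      = ((0 : ℤ) : TP 3) + ((A * a0 : ℤ) : TP 3) * xx 3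
        + ((A * a1 + B * a0 : ℤ) : TP 3) * xx 3 ^ 2 := by
  calc ((A : TP 3) * xx 3 + (B : TP 3) * xx 3 ^ 2)
        * ((a0 : TP 3) + (a1 : TP 3) * xx 3 + (a2 : TP 3) * xx 3 ^ 2)
      = ((0 : ℤ) : TP 3) + ((A * a0 : ℤ) : TP 3) * xx 3
        + ((A * a1 + B * a0 : ℤ) : TP 3) * xx 3 ^ 2
        + xx 3 ^ 3 * ((A : TP 3) * a2 + (B : TP 3) * a1)
        + xx 3 ^ 4 * ((B : TP 3) * a2) := by push_cast; ring
    _ = _ := by rw [xx3_pow3, xx3_pow4]; ring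

def sigHom (u v : ℤ) : TP 3 →+* TP 3 :=
  endo ((u : TP 3) * xx 3 + (v : TP 3) * xx 3 ^ 2) (cube_tri u v)

lemma sigHom_x (u v : ℤ) : sigHom u v (xx 3) = (u : TP 3) * xx 3 + (v : TP 3) * xx 3 ^ 2 :=
  endo_x _ _

lemma sigHom_tri (u v A B : ℤ) :
    sigHom u v ((A : TP 3) * xx 3 + (B : TP 3) * xx 3 ^ 2)
      = ((A * u : ℤ) : TP 3) * xx 3 + ((A * v + B * u ^ 2 : ℤ) : TP 3) * xx 3 ^ 2 := by
  rw [hom_tri, sigHom_x, sq_tri]; push_cast; ring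

lemma sig_comp (u v w : ℤ) (hu2 : u * u = 1) (hw : w = -(u * v)) :
    (sigHom u w).comp (sigHom u v) = RingHom.id (TP 3) := by
  apply tp3_ext
  rw [RingHom.comp_apply, sigHom_x, sigHom_tri, RingHom.id_apply]
  rw [show u * u = (1:ℤ) from hu2, show u * w + v * u ^ 2 = (0:ℤ) from by
    rw [hw]; ring]
  push_cast; ring

def sigEquiv (u v : ℤ) (hu2 : u * u = 1) : TP 3 ≃+* TP 3 :=
  RingEquiv.ofRingHom (sigHom u v) (sigHom u (-(u * v)))
    (sig_comp u (-(u * v)) v hu2 (by linear_combination -v * hu2))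
    (sig_comp u v (-(u * v)) hu2 rfl)

lemma sigEquiv_x (u v : ℤ) (hu2 : u * u = 1) :
    (sigEquiv u v hu2).toRingHom (xx 3) = (u : TP 3) * xx 3 + (v : TP 3) * xx 3 ^ 2 :=
  sigHom_x u v

lemma sigEquiv_hom (u v : ℤ) (hu2 : u * u = 1) :
    (sigEquiv u v hu2).toRingHom = sigHom u v := rfl

lemma cast_uu (u : ℤ) (hu2 : u * u = 1) : ((u : TP 3)) * (u : TP 3) = 1 := by
  have := congrArg (fun z : ℤ => ((z : TP 3))) hu2
  push_cast at this
  exact this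

lemma sig_span (u v : ℤ) (hu2 : u * u = 1) :
    (Ideal.span {xx 3}).map (sigEquiv u v hu2).toRingHom = Ideal.span {xx 3} := by
  rw [Ideal.map_span, Set.image_singleton, sigEquiv_x]
  have hcast := cast_uu u hu2
  apply le_antisymm
  · rw [Ideal.span_le, Set.singleton_subset_iff]
    exact Ideal.mem_span_singleton.2 ⟨(u : TP 3) + (v : TP 3) * xx 3, by ring⟩
  · rw [Ideal.span_le, Set.singleton_subset_iff]
    refine Ideal.mem_span_singleton.2
      ⟨(u : TP 3) - ((u * v : ℤ) : TP 3) * ((u : TP 3) * xx 3 + (v : TP 3) * xx 3 ^ 2), ?_⟩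
    have hsq := sq_tri u v
    calc xx 3
        = (u : TP 3) * ((u : TP 3) * xx 3 + (v : TP 3) * xx 3 ^ 2)
          - ((u * v : ℤ) : TP 3) * (((u : TP 3) * xx 3 + (v : TP 3) * xx 3 ^ 2) ^ 2) := by
          rw [hsq]
          push_cast
          linear_combination (-(xx 3) + (u : TP 3) * (v : TP 3) * xx 3 ^ 2) * hcast
      _ = _ := by ring

lemma psi_tri (F : AdamsFamily 3) (β γ : Nat.Primes → ℤ)
    (h : ∀ p, F.ψ p (xx 3) = (β p : TP 3) * xx 3 + (γ p : TP 3) * xx 3 ^ 2)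
    (p q : Nat.Primes) :
    F.ψ p (F.ψ q (xx 3)) = ((0 : ℤ) : TP 3) + ((β q * β p : ℤ) : TP 3) * xx 3
      + ((β q * γ p + γ q * (β p) ^ 2 : ℤ) : TP 3) * xx 3 ^ 2 := by
  rw [h q, hom_tri, h p, sq_tri]
  push_cast; ring

lemma comm_rel (F : AdamsFamily 3) (β γ : Nat.Primes → ℤ)
    (h : ∀ p, F.ψ p (xx 3) = (β p : TP 3) * xx 3 + (γ p : TP 3) * xx 3 ^ 2)
    (p q : Nat.Primes) :
    γ q * ((β p) ^ 2 - β p) = γ p * ((β q) ^ 2 - β q) := by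
  have e := DFunLike.congr_fun (F.comm p q) (xx 3)
  simp only [RingHom.coe_comp, Function.comp_apply] at e
  rw [psi_tri F β γ h p q, psi_tri F β γ h q p] at e
  obtain ⟨-, -, h2⟩ := tri_eq e
  linear_combination h2

lemma frob_rel (F : AdamsFamily 3) (β γ : Nat.Primes → ℤ)
    (h : ∀ p, F.ψ p (xx 3) = (β p : TP 3) * xx 3 + (γ p : TP 3) * xx 3 ^ 2) :
    2 ∣ β P2 ∧ 2 ∣ (γ P2 - 1) := by
  have m := F.frob P2 (xx 3)
  have hps : ((P2 : Nat.Primes) : ℕ) = 2 := rfl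
  rw [hps] at m
  have hmem : (β P2 : TP 3) * xx 3 + ((γ P2 - 1 : ℤ) : TP 3) * xx 3 ^ 2
      ∈ Ideal.span {(((2:ℤ) : ℤ) : TP 3)} := by
    have hrw : (β P2 : TP 3) * xx 3 + ((γ P2 - 1 : ℤ) : TP 3) * xx 3 ^ 2
        = F.ψ P2 (xx 3) - xx 3 ^ 2 := by
      rw [h P2]; push_cast; ring
    have hcast : (((2:ℕ)) : TP 3) = (((2:ℤ) : ℤ) : TP 3) := by push_cast; ring
    rw [hrw, ← hcast]
    exact m
  exact tri_mod hmem

lemma intertwine (S Sb : AdamsFamily 3) (b c bb cb : Nat.Primes → ℤ)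
    (hS : ∀ p : Nat.Primes, S.ψ p (xx 3) = (b p : TP 3) * xx 3 + (c p : TP 3) * xx 3 ^ 2)
    (hSb : ∀ p : Nat.Primes, Sb.ψ p (xx 3) = (bb p : TP 3) * xx 3 + (cb p : TP 3) * xx 3 ^ 2)
    (u v : ℤ) (hu2 : u * u = 1)
    (h1 : ∀ p, b p = bb p) (hc : ∀ p, c p = u * cb p + v * ((b p) ^ 2 - b p))
    (p : Nat.Primes) :
    (sigEquiv u v hu2).toRingHom.comp (S.ψ p) = (Sb.ψ p).comp (sigEquiv u v hu2).toRingHom := by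
  have hu2' : u ^ 2 = 1 := by linear_combination hu2
  apply tp3_ext
  simp only [RingHom.coe_comp, Function.comp_apply]
  rw [sigEquiv_hom, hS p, sigHom_tri, sigHom_x, hom_tri, hSb p, sq_tri]
  rw [hc p, h1 p, hu2']
  push_cast; ring

theorem stmt4 (S Sb : AdamsFamily 3) (b c bb cb : Nat.Primes → ℤ)
    (hS : ∀ p : Nat.Primes, S.ψ p (xx 3) = (b p : TP 3) * xx 3 + (c p : TP 3) * xx 3 ^ 2)
    (hSb : ∀ p : Nat.Primes, Sb.ψ p (xx 3) = (bb p : TP 3) * xx 3 + (cb p : TP 3) * xx 3 ^ 2) :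
    AdamsIso S Sb ↔
      ((∀ p : Nat.Primes, b p = bb p) ∧
       ((b P2 = 0 ∧ bb P2 = 0) →
          ∃ u : ℤ, (u = 1 ∨ u = -1) ∧ ∀ p : Nat.Primes, c p = u * cb p) ∧
       ((b P2 = bb P2 ∧ b P2 ≠ 0) →
          ∃ u : ℤ, (u = 1 ∨ u = -1) ∧
            ∃ a : ℤ, a * (b P2 * (b P2 - 1)) = c P2 - u * cb P2)) := by
  constructor
  · rintro ⟨σ, hspan, hcomm⟩
    set f := σ.toRingHom with hf
    have hms : Ideal.span {f (xx 3)} = Ideal.span {xx 3} := by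
      rw [← hspan, Ideal.map_span, Set.image_singleton]
    obtain ⟨a0, u, v, hfx⟩ := repr3 (f (xx 3))
    have hmem1 : f (xx 3) ∈ Ideal.span {xx 3} := by
      rw [← hms]; exact Ideal.subset_span rfl
    obtain ⟨t, ht⟩ := Ideal.mem_span_singleton.1 hmem1
    obtain ⟨t0, t1, t2, htt⟩ := repr3 t
    have ht' : (a0 : TP 3) + (u : TP 3) * xx 3 + (v : TP 3) * xx 3 ^ 2
        = ((0:ℤ) : TP 3) + (t0 : TP 3) * xx 3 + (t1 : TP 3) * xx 3 ^ 2 := by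
      rw [← x_mul_tri t0 t1 t2, ← htt, ← hfx]
      exact ht
    obtain ⟨ha0, -, -⟩ := tri_eq ht'
    have hfx' : f (xx 3) = (u : TP 3) * xx 3 + (v : TP 3) * xx 3 ^ 2 := by
      rw [hfx, ha0]; push_cast; ring
    have hmem2 : xx 3 ∈ Ideal.span {f (xx 3)} := by
      rw [hms]; exact Ideal.subset_span rfl
    obtain ⟨s, hs⟩ := Ideal.mem_span_singleton.1 hmem2
    obtain ⟨s0, s1, s2, hss⟩ := repr3 s
    have hs' : ((0:ℤ) : TP 3) + ((1:ℤ) : TP 3) * xx 3 + ((0:ℤ) : TP 3) * xx 3 ^ 2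
        = ((0:ℤ) : TP 3) + ((u * s0 : ℤ) : TP 3) * xx 3
          + ((u * s1 + v * s0 : ℤ) : TP 3) * xx 3 ^ 2 := by
      rw [← mul_tri u v s0 s1 s2, ← hss, ← hfx']
      rw [← hs]; push_cast; ring
    obtain ⟨-, hu1, -⟩ := tri_eq hs'
    have hu : u = 1 ∨ u = -1 := Int.isUnit_iff.1 (IsUnit.of_mul_eq_one (a := u) s0 hu1.symm)
    have hu0 : u ≠ 0 := by rcases hu with h | h <;> rw [h] <;> norm_num
    have hu2' : u ^ 2 = 1 := by rcases hu with h | h <;> rw [h] <;> norm_num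
    have key : ∀ p : Nat.Primes, b p = bb p ∧ c p = u * cb p + v * ((b p) ^ 2 - b p) := by
      intro p
      have e := DFunLike.congr_fun (hcomm p) (xx 3)
      simp only [RingHom.coe_comp, Function.comp_apply] at e
      have eL : f (S.ψ p (xx 3)) = ((0:ℤ) : TP 3) + ((b p * u : ℤ) : TP 3) * xx 3
          + ((b p * v + c p * u ^ 2 : ℤ) : TP 3) * xx 3 ^ 2 := by
        rw [hS p, hom_tri, hfx', sq_tri]; push_cast; ring
      have eR : Sb.ψ p (f (xx 3)) = ((0:ℤ) : TP 3) + ((u * bb p : ℤ) : TP 3) * xx 3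
          + ((u * cb p + v * (bb p) ^ 2 : ℤ) : TP 3) * xx 3 ^ 2 := by
        rw [hfx', hom_tri, hSb p, sq_tri]; push_cast; ring
      obtain ⟨-, e1, e2⟩ := tri_eq ((eL.symm.trans e).trans eR)
      have hb : b p = bb p := mul_left_cancel₀ hu0 (by linear_combination e1)
      rw [← hb, hu2'] at e2
      exact ⟨hb, by linear_combination e2⟩
    refine ⟨fun p => (key p).1, ?_, ?_⟩
    · rintro ⟨hb2, -⟩
      refine ⟨u, hu, fun p => ?_⟩
      have hcomm2 := comm_rel S b c hS p P2
      obtain ⟨-, hfr2⟩ := frob_rel S b c hS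
      have hc2ne : c P2 ≠ 0 := by omega
      rw [hb2] at hcomm2
      have h0 : c P2 * ((b p) ^ 2 - b p) = 0 := by linear_combination hcomm2
      have hz : (b p) ^ 2 - b p = 0 := by
        rcases mul_eq_zero.1 h0 with h | h
        · exact absurd h hc2ne
        · exact h
      have hcc := (key p).2
      rw [hz, mul_zero, add_zero] at hcc
      exact hcc
    · rintro ⟨-, hb2ne⟩
      refine ⟨u, hu, v, ?_⟩
      have := (key P2).2
      linear_combination -this
  · rintro ⟨h1, h2a, h2b⟩
    by_cases hb2 : b P2 = 0
    · obtain ⟨u, hu, hcp⟩ := h2a ⟨hb2, by rw [← h1 P2]; exact hb2⟩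
      have hu2 : u * u = 1 := by rcases hu with h | h <;> rw [h] <;> norm_num
      exact ⟨sigEquiv u 0 hu2, sig_span u 0 hu2,
        fun p => intertwine S Sb b c bb cb hS hSb u 0 hu2 h1
          (fun q => by rw [hcp q]; ring) p⟩
    · obtain ⟨u, hu, a, ha⟩ := h2b ⟨h1 P2, hb2⟩
      have hu2 : u * u = 1 := by rcases hu with h | h <;> rw [h] <;> norm_num
      obtain ⟨hfd, -⟩ := frob_rel S b c hS
      have hne : (b P2) ^ 2 - b P2 ≠ 0 := by
        have hfac : (b P2) ^ 2 - b P2 = b P2 * (b P2 - 1) := by ring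
        rw [hfac]
        exact mul_ne_zero hb2 (by omega)
      have hcp : ∀ p, c p = u * cb p + a * ((b p) ^ 2 - b p) := by
        intro p
        have e1 := comm_rel S b c hS p P2
        have e2' : cb P2 * ((b p) ^ 2 - b p) = cb p * ((b P2) ^ 2 - b P2) := by
          rw [h1 p, h1 P2]; exact comm_rel Sb bb cb hSb p P2
        apply mul_right_cancel₀ hne
        linear_combination (-1 : ℤ) * e1 + u * e2' + (-((b p) ^ 2 - b p)) * ha
      exact ⟨sigEquiv u a hu2, sig_span u a hu2,
        fun p => intertwine S Sb b c bb cb hS hSb u a hu2 h1 hcp p⟩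
end
end

section
/- The family given by ψ_p(x) = (1 + x)^p − 1 (for all primes p) is a filtered λ-ring structure on ℤ[x]/(x⁴), and every filtered λ-ring structure R on ℤ[x]/(x⁴) satisfying ψ_p^R(x) ≡ p x (mod x²) for all primes p is isomorphic to it. -/
open Polynomial

noncomputable section

namespace Aux

def mkq : Polynomial ℤ →+* TP 4 := Ideal.Quotient.mk _

lemma xx_eq : xx 4 = mkq X := rfl

lemma x4 : (xx 4) ^ 4 = 0 := by
  rw [xx_eq, ← map_pow]
  exact Ideal.Quotient.eq_zero_iff_mem.2 (Ideal.mem_span_singleton_self _)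

/-- normal form -/
def N (a b c d : ℤ) : TP 4 :=
  (a : TP 4) + (b : TP 4) * xx 4 + (c : TP 4) * (xx 4) ^ 2 + (d : TP 4) * (xx 4) ^ 3

lemma N_mul (a b c d e f g h : ℤ) :
    N a b c d * N e f g h =
      N (a*e) (a*f + b*e) (a*g + b*f + c*e) (a*h + b*g + c*f + d*e) := by
  unfold N
  push_cast
  linear_combination ((b:TP 4)*(h:TP 4) + (c:TP 4)*(g:TP 4) + (d:TP 4)*(f:TP 4)
    + ((c:TP 4)*(h:TP 4) + (d:TP 4)*(g:TP 4)) * xx 4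
    + (d:TP 4)*(h:TP 4) * (xx 4)^2) * x4

lemma N_add (a b c d e f g h : ℤ) :
    N a b c d + N e f g h = N (a+e) (b+f) (c+g) (d+h) := by
  unfold N; push_cast; ring

lemma N_sub (a b c d e f g h : ℤ) :
    N a b c d - N e f g h = N (a-e) (b-f) (c-g) (d-h) := by
  unfold N; push_cast; ring

lemma N_zero : N 0 0 0 0 = 0 := by unfold N; push_cast; ring
lemma N_one : N 1 0 0 0 = 1 := by unfold N; push_cast; ring
lemma N_int (a : ℤ) : (a : TP 4) = N a 0 0 0 := by unfold N; push_cast; ring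
lemma N_nat (a : ℕ) : ((a : ℕ) : TP 4) = N a 0 0 0 := by
  rw [← N_int]; push_cast; rfl
lemma N_x : xx 4 = N 0 1 0 0 := by unfold N; push_cast; ring
lemma N_x2 : (xx 4) ^ 2 = N 0 0 1 0 := by unfold N; push_cast; ring
lemma N_x3 : (xx 4) ^ 3 = N 0 0 0 1 := by unfold N; push_cast; ring

lemma N_mk (a b c d : ℤ) : N a b c d = mkq (C a + C b * X + C c * X^2 + C d * X^3) := by
  have hC : ∀ t : ℤ, mkq (C t) = (t : TP 4) := fun t => by
    have : (t : ℤ[X]) = C t := by simp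
    rw [← this]; exact map_intCast mkq t
  simp only [map_add, map_mul, map_pow, ← xx_eq, hC]
  rfl

lemma N_inj {a b c d e f g h : ℤ} (H : N a b c d = N e f g h) :
    a = e ∧ b = f ∧ c = g ∧ d = h := by
  rw [N_mk, N_mk] at H
  have hmem := Ideal.Quotient.eq.1 H
  rw [Ideal.mem_span_singleton] at hmem
  have hdeg : (C a + C b * X + C c * X^2 + C d * X^3
      - (C e + C f * X + C g * X^2 + C h * X^3)).degree < (X ^ 4 : Polynomial ℤ).degree := by
    rw [degree_X_pow]
    refine lt_of_le_of_lt (b := 3) ?_ (by norm_num)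
    compute_degree
  have h0 := Polynomial.eq_zero_of_dvd_of_degree_lt hmem hdeg
  refine ⟨?_, ?_, ?_, ?_⟩
  · have := congrArg (fun q => Polynomial.coeff q 0) h0
    simp only [coeff_sub, coeff_add, coeff_C_mul, coeff_X, coeff_X_pow, coeff_C,
      coeff_zero] at this
    norm_num at this; linarith
  · have := congrArg (fun q => Polynomial.coeff q 1) h0
    simp only [coeff_sub, coeff_add, coeff_C_mul, coeff_X, coeff_X_pow, coeff_C,
      coeff_zero] at this
    norm_num at this; linarith
  · have := congrArg (fun q => Polynomial.coeff q 2) h0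
    simp only [coeff_sub, coeff_add, coeff_C_mul, coeff_X, coeff_X_pow, coeff_C,
      coeff_zero] at this
    norm_num at this; linarith
  · have := congrArg (fun q => Polynomial.coeff q 3) h0
    simp only [coeff_sub, coeff_add, coeff_C_mul, coeff_X, coeff_X_pow, coeff_C,
      coeff_zero] at this
    norm_num at this; linarith

lemma N_congr {a b c d a' b' c' d' : ℤ} (h1 : a = a') (h2 : b = b') (h3 : c = c')
    (h4 : d = d') : N a b c d = N a' b' c' d' := by subst h1 h2 h3 h4; rfl

lemma xpow_zero {k : ℕ} : (xx 4) ^ (k + 4) = 0 := by rw [pow_add, x4, mul_zero]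

lemma N_surj (t : TP 4) : ∃ a b c d : ℤ, t = N a b c d := by
  obtain ⟨P, rfl⟩ := Ideal.Quotient.mk_surjective (I := Ideal.span {(X : Polynomial ℤ) ^ 4}) t
  show ∃ a b c d, mkq P = N a b c d
  induction P using Polynomial.induction_on' with
  | add p q hp hq =>
    obtain ⟨a, b, c, d, hp⟩ := hp
    obtain ⟨e, f, g, h, hq⟩ := hq
    exact ⟨a+e, b+f, c+g, d+h, by rw [map_add, hp, hq, N_add]⟩
  | monomial n t =>
    have hmon : mkq (Polynomial.monomial n t) = (t : TP 4) * (xx 4) ^ n := by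
      have h1 : (t : ℤ[X]) = C t := by simp
      rw [← Polynomial.C_mul_X_pow_eq_monomial, map_mul, map_pow, ← xx_eq, ← h1, map_intCast]
    match n with
    | 0 => exact ⟨t, 0, 0, 0, by rw [hmon]; unfold N; push_cast; ring⟩
    | 1 => exact ⟨0, t, 0, 0, by rw [hmon]; unfold N; push_cast; ring⟩
    | 2 => exact ⟨0, 0, t, 0, by rw [hmon]; unfold N; push_cast; ring⟩
    | 3 => exact ⟨0, 0, 0, t, by rw [hmon]; unfold N; push_cast; ring⟩
    | (k+4) => exact ⟨0, 0, 0, 0, by rw [hmon, xpow_zero, mul_zero, N_zero]⟩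

lemma hom_ext {A : Type} [Ring A] {f g : TP 4 →+* A} (h : f (xx 4) = g (xx 4)) : f = g := by
  apply Ideal.Quotient.ringHom_ext
  apply Polynomial.ringHom_ext
  · intro a
    have : (a : ℤ[X]) = C a := by simp
    simp only [RingHom.comp_apply]
    rw [show (Ideal.Quotient.mk (Ideal.span {(X : Polynomial ℤ) ^ 4})) = mkq from rfl, ← this,
      map_intCast, map_intCast, map_intCast]
  · exact h

/-- endomorphism of TP 4 sending x to a (with a^4 = 0) -/
def endo (a : TP 4) (h : a ^ 4 = 0) : TP 4 →+* TP 4 :=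
  Ideal.Quotient.lift _ (eval₂RingHom (Int.castRingHom (TP 4)) a) (by
    intro P hP
    rw [Ideal.mem_span_singleton] at hP
    obtain ⟨Q, rfl⟩ := hP
    rw [map_mul, coe_eval₂RingHom, eval₂_pow, eval₂_X, h, zero_mul])

lemma endo_x (a : TP 4) (h : a ^ 4 = 0) : endo a h (xx 4) = a := by
  show (Ideal.Quotient.lift _ _ _) (Ideal.Quotient.mk _ X) = a
  rw [Ideal.Quotient.lift_mk]
  simp

lemma apply_N (f : TP 4 →+* TP 4) {q B C : ℤ} (hf : f (xx 4) = N 0 q B C) (a b c d : ℤ) :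
    f (N a b c d) = N a (b*q) (b*B + c*q^2) (b*C + 2*c*q*B + d*q^3) := by
  have e2 : (N 0 q B C)^2 = N 0 0 (q^2) (2*q*B) := by
    rw [sq, N_mul]; apply N_congr <;> ring
  have e3 : (N 0 q B C)^3 = N 0 0 0 (q^3) := by
    rw [pow_succ, e2, N_mul]; apply N_congr <;> ring
  rw [show N a b c d = (a : TP 4) + (b : TP 4) * xx 4 + (c : TP 4) * (xx 4)^2
      + (d : TP 4) * (xx 4)^3 from rfl]
  rw [map_add, map_add, map_add, map_mul, map_mul, map_mul, map_pow, map_pow,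
    map_intCast, map_intCast, map_intCast, map_intCast, hf, e2, e3,
    N_int a, N_int b, N_int c, N_int d, N_mul, N_mul, N_mul, N_add, N_add, N_add]
  apply N_congr <;> ring

lemma one_add_x_pow (n : ℕ) : ∃ A B : ℤ, 2*A = n*(n-1) ∧ 6*B = n*(n-1)*(n-2) ∧
    (1 + xx 4)^n = N 1 n A B := by
  induction n with
  | zero => exact ⟨0, 0, by norm_num, by norm_num, by rw [pow_zero, ← N_one]; rfl⟩
  | succ n ih =>
    obtain ⟨A, B, hA, hB, hN⟩ := ih
    refine ⟨A + n, A + B, ?_, ?_, ?_⟩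
    · push_cast; push_cast at hA; linear_combination hA
    · push_cast; push_cast at hA hB; linear_combination hB + 3*hA
    · rw [pow_succ, hN]
      have h1 : (1 : TP 4) + xx 4 = N 1 1 0 0 := by rw [N_x, ← N_one, N_add]; norm_num
      rw [h1, N_mul]
      apply N_congr <;> push_cast <;> ring

lemma mem_span_int (n : ℤ) (t : TP 4) :
    t ∈ Ideal.span {(n : TP 4)} ↔ ∃ e f g h : ℤ, t = N (n*e) (n*f) (n*g) (n*h) := by
  rw [Ideal.mem_span_singleton]
  constructor
  · rintro ⟨s, rfl⟩
    obtain ⟨e, f, g, h, rfl⟩ := N_surj s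
    exact ⟨e, f, g, h, by rw [N_int n, N_mul]; apply N_congr <;> ring⟩
  · rintro ⟨e, f, g, h, rfl⟩
    exact ⟨N e f g h, by rw [N_int n, N_mul]; apply N_congr <;> ring⟩

lemma sq00 (c d g h : ℤ) : N 0 0 c d * N 0 0 g h = 0 := by
  rw [N_mul, ← N_zero]; apply N_congr <;> ring

lemma pow4_zero (b c d : ℤ) : (N 0 b c d) ^ 4 = 0 := by
  have h2 : (N 0 b c d)^2 = N 0 0 (b^2) (2*b*c) := by
    rw [sq, N_mul]; apply N_congr <;> ring
  calc (N 0 b c d)^4 = ((N 0 b c d)^2)^2 := by ring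
  _ = 0 := by rw [h2, sq, sq00]

lemma sub_one_eq_N (n : ℕ) : ∃ A B : ℤ, 2*A = n*(n-1) ∧ 6*B = n*(n-1)*(n-2) ∧
    (1 + xx 4)^n - 1 = N 0 n A B := by
  obtain ⟨A, B, hA, hB, hN⟩ := one_add_x_pow n
  refine ⟨A, B, hA, hB, ?_⟩
  rw [hN, ← N_one, N_sub]; norm_num

lemma sub_one_pow4 (n : ℕ) : ((1 + xx 4)^n - 1)^4 = 0 := by
  obtain ⟨A, B, _, _, hN⟩ := sub_one_eq_N n
  rw [hN]; exact pow4_zero _ _ _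

/-- the standard Adams operation of index n -/
def Sψ (n : ℕ) : TP 4 →+* TP 4 := endo ((1 + xx 4)^n - 1) (sub_one_pow4 n)

lemma Sψ_x (n : ℕ) : Sψ n (xx 4) = (1 + xx 4)^n - 1 := endo_x _ _

lemma Sψ_comp (n m : ℕ) : Sψ n (Sψ m (xx 4)) = (1 + xx 4)^(m*n) - 1 := by
  rw [Sψ_x, map_sub, map_pow, map_add, map_one, Sψ_x,
    show (1 : TP 4) + ((1 + xx 4)^n - 1) = (1 + xx 4)^n by ring, ← pow_mul, mul_comm n m]

lemma charP_quot (p : ℕ) (hp : p.Prime) :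
    CharP (TP 4 ⧸ Ideal.span {((p : ℕ) : TP 4)}) p := by
  constructor
  intro n
  rw [← map_natCast (Ideal.Quotient.mk (Ideal.span {((p : ℕ) : TP 4)})) n,
    Ideal.Quotient.eq_zero_iff_mem]
  have hgen : ((p : ℕ) : TP 4) = (((p : ℕ) : ℤ) : TP 4) := by push_cast; rfl
  rw [hgen, mem_span_int]
  constructor
  · rintro ⟨e, f, g, h, hN⟩
    rw [N_nat] at hN
    obtain ⟨h1, -, -, -⟩ := N_inj hN
    exact_mod_cast (Int.natCast_dvd_natCast (m := p) (n := n)).1 ⟨e, by exact_mod_cast h1⟩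
  · rintro ⟨m, rfl⟩
    exact ⟨m, 0, 0, 0, by rw [N_nat]; apply N_congr <;> push_cast <;> ring⟩

set_option synthInstance.maxHeartbeats 1000000 in
/-- The standard filtered λ-ring structure. -/
def Sfam : AdamsFamily 4 where
  ψ := fun p => Sψ (p : ℕ)
  maps_ideal := by
    intro p a ha
    rw [Ideal.mem_span_singleton] at ha ⊢
    obtain ⟨t, rfl⟩ := ha
    rw [map_mul]
    obtain ⟨A, B, -, -, hN⟩ := sub_one_eq_N (p : ℕ)
    have hdvd : xx 4 ∣ Sψ (p : ℕ) (xx 4) := by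
      rw [Sψ_x, hN, N_x]
      exact ⟨N (p:ℕ) A B 0, by rw [N_mul]; apply N_congr <;> ring⟩
    exact hdvd.mul_right _
  comm := by
    intro p q
    apply hom_ext
    rw [RingHom.comp_apply, RingHom.comp_apply, Sψ_comp, Sψ_comp, mul_comm]
  frob := by
    intro p a
    set I := Ideal.span {((p : ℕ) : TP 4)} with hI
    haveI : Fact (p : ℕ).Prime := ⟨p.2⟩
    haveI : CharP (TP 4 ⧸ I) (p : ℕ) := charP_quot _ p.2
    set π := Ideal.Quotient.mk I with hπ
    have key : π.comp (Sψ (p : ℕ)) = (frobenius (TP 4 ⧸ I) (p : ℕ)).comp π := by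
      apply hom_ext
      rw [RingHom.comp_apply, RingHom.comp_apply, Sψ_x, frobenius_def]
      have hc : ((1 : TP 4 ⧸ I) + π (xx 4)) ^ (p:ℕ) = 1 + π (xx 4) ^ (p:ℕ) :=
        (add_pow_char (1 : TP 4 ⧸ I) (π (xx 4)) (p := (p:ℕ))).trans (congrArg (· + _) (one_pow (M := TP 4 ⧸ I) (p:ℕ)))
      rw [map_sub π, map_pow π, map_add π, map_one π, hc]
      ring
    rw [← Ideal.Quotient.eq_zero_iff_mem, map_sub, map_pow]
    have h2 := RingHom.congr_fun key a
    simp only [RingHom.comp_apply] at h2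
    rw [h2, frobenius_def, sub_self]

lemma P2_coe : ((P2 : ℕ) : ℤ) = 2 := rfl
lemma P3_coe : ((P3 : ℕ) : ℤ) = 3 := rfl

lemma uniqueness (R : AdamsFamily 4)
    (hR : ∀ p : Nat.Primes, R.ψ p (xx 4) - ((p : ℕ) : TP 4) * xx 4 ∈ Ideal.span {xx 4 ^ 2}) :
    ∃ σ : TP 4 ≃+* TP 4,
      (Ideal.span {xx 4}).map σ.toRingHom = Ideal.span {xx 4} ∧
      ∀ p : Nat.Primes, σ.toRingHom.comp (R.ψ p) = (Sψ (p : ℕ)).comp σ.toRingHom := by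
  -- Step A: normal forms of R.ψ p (x)
  have stepA : ∀ p : Nat.Primes, ∃ b c : ℤ, R.ψ p (xx 4) = N 0 ((p:ℕ):ℤ) b c := by
    intro p
    have h := hR p
    rw [Ideal.mem_span_singleton] at h
    obtain ⟨t, ht⟩ := h
    obtain ⟨e, f, g, k, rfl⟩ := N_surj t
    refine ⟨e, f, ?_⟩
    have hx2t : (xx 4)^2 * N e f g k = N 0 0 e f := by
      rw [N_x2, N_mul]; apply N_congr <;> ring
    have hpx : ((p : ℕ) : TP 4) * xx 4 = N 0 ((p:ℕ):ℤ) 0 0 := by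
      have : ((p : ℕ) : TP 4) = (((p:ℕ):ℤ) : TP 4) := by push_cast; rfl
      rw [this, N_int, N_x, N_mul]; apply N_congr <;> ring
    have := sub_eq_iff_eq_add.1 ht
    rw [this, hx2t, hpx, N_add]
    apply N_congr <;> ring
  choose b c hbc using stepA
  -- commutation relations with p = 2
  have comm2 : ∀ p : Nat.Primes,
      2*(b p) + (b P2)*((p:ℕ):ℤ)^2 = ((p:ℕ):ℤ)*(b P2) + (b p)*4 ∧
      2*(c p) + 2*(b P2)*((p:ℕ):ℤ)*(b p) + (c P2)*((p:ℕ):ℤ)^3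
        = ((p:ℕ):ℤ)*(c P2) + 2*(b P2)*2*(b p) + (c p)*8 := by
    intro p
    have hcm := RingHom.congr_fun (R.comm p P2) (xx 4)
    rw [RingHom.comp_apply, RingHom.comp_apply, hbc P2, hbc p,
      apply_N (R.ψ p) (hbc p), apply_N (R.ψ P2) (hbc P2), P2_coe] at hcm
    obtain ⟨-, h1, h2, h3⟩ := N_inj hcm
    constructor
    · linear_combination h2
    · linear_combination h3
  -- frobenius congruences at 2 and 3
  have frob_mem : ∀ p : Nat.Primes, ∀ k : ℕ, R.ψ p (xx 4) - (xx 4)^(p:ℕ) ∈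
      Ideal.span {(((p:ℕ):ℤ) : TP 4)} := by
    intro p k
    have h := R.frob p (xx 4)
    have : ((p : ℕ) : TP 4) = (((p:ℕ):ℤ) : TP 4) := by push_cast; rfl
    rwa [this] at h
  obtain ⟨u, hu⟩ : ∃ u : ℤ, b P2 = 2*u + 1 := by
    have h := frob_mem P2 0
    rw [mem_span_int] at h
    obtain ⟨e, f, g, k, hN⟩ := h
    rw [hbc P2, P2_coe, show ((P2:ℕ)) = 2 from rfl, N_x2, N_sub] at hN
    obtain ⟨-, -, h3, -⟩ := N_inj hN
    exact ⟨g, by linarith⟩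
  obtain ⟨h2, hc2⟩ : ∃ h2 : ℤ, c P2 = 2*h2 := by
    have h := frob_mem P2 0
    rw [mem_span_int] at h
    obtain ⟨e, f, g, k, hN⟩ := h
    rw [hbc P2, P2_coe, show ((P2:ℕ)) = 2 from rfl, N_x2, N_sub] at hN
    obtain ⟨-, -, -, h4⟩ := N_inj hN
    exact ⟨k, by linarith⟩
  obtain ⟨m, hm⟩ : ∃ m : ℤ, c P3 - 1 = 3*m := by
    have h := frob_mem P3 0
    rw [mem_span_int] at h
    obtain ⟨e, f, g, k, hN⟩ := h
    rw [hbc P3, P3_coe, show ((P3:ℕ)) = 3 from rfl, N_x3, N_sub] at hN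
    obtain ⟨-, -, -, h4⟩ := N_inj hN
    exact ⟨k, by linarith⟩
  -- c P3 = 4 c2 + b2^2
  have hc3 : c P3 = 4*(c P2) + (b P2)^2 := by
    obtain ⟨e2, e3⟩ := comm2 P3
    rw [P3_coe] at e2 e3
    have hb3 : b P3 = 3*(b P2) := by linarith
    rw [hb3] at e3
    nlinarith [e3]
  -- define v
  obtain ⟨v, hv⟩ : ∃ v : ℤ, 6*v = 4*u^2 - 2*u + c P2 := by
    have key : 4*(c P2) + 4*u^2 + 4*u = 3*m := by nlinarith [hc3, hm, hu]
    refine ⟨(4*(u*u) - 2*u + c P2)/6, ?_⟩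
    have h1 : c P2 = 2*h2 := hc2
    have h2' : 4*(c P2) + 4*(u*u) + 4*u = 3*m := by nlinarith [key]
    have : u^2 = u*u := sq u
    rw [this]
    omega
  -- the automorphism
  set s : TP 4 := N 0 1 u v with hs
  have hs4 : s ^ 4 = 0 := pow4_zero _ _ _
  set t : TP 4 := N 0 1 (-u) (2*u^2 - v) with hts
  have ht4 : t ^ 4 = 0 := pow4_zero _ _ _
  set σh : TP 4 →+* TP 4 := endo s hs4 with hσh
  set τh : TP 4 →+* TP 4 := endo t ht4 with hτh
  have hσx : σh (xx 4) = N 0 1 u v := endo_x _ _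
  have hτx : τh (xx 4) = N 0 1 (-u) (2*u^2 - v) := endo_x _ _
  have hστ : σh.comp τh = RingHom.id (TP 4) := by
    apply hom_ext
    rw [RingHom.comp_apply, hτx, apply_N σh hσx, RingHom.id_apply, N_x]
    apply N_congr <;> ring
  have hτσ : τh.comp σh = RingHom.id (TP 4) := by
    apply hom_ext
    rw [RingHom.comp_apply, hσx, apply_N τh hτx, RingHom.id_apply, N_x]
    apply N_congr <;> ring
  refine ⟨RingEquiv.ofRingHom σh τh hστ hτσ, ?_, ?_⟩
  · -- ideal condition
    have hto : (RingEquiv.ofRingHom σh τh hστ hτσ).toRingHom = σh := rfl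
    rw [hto, Ideal.map_span, Set.image_singleton]
    have h1 : σh (xx 4) = xx 4 * N 1 u v 0 := by
      rw [hσx, N_x, N_mul]; apply N_congr <;> ring
    apply le_antisymm
    · rw [Ideal.span_singleton_le_span_singleton, h1]
      exact Dvd.intro _ rfl
    · rw [Ideal.span_singleton_le_span_singleton, h1]
      refine ⟨N 1 (-u) (u^2-v) (2*u*v-u^3), ?_⟩
      rw [mul_assoc, N_mul, show xx 4 = xx 4 * 1 from (mul_one _).symm]
      congr 1
      · rw [mul_one]
      · rw [← N_one]; apply N_congr <;> ring
    -- intertwining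
  · intro p
    have hto : (RingEquiv.ofRingHom σh τh hστ hτσ).toRingHom = σh := rfl
    rw [hto]
    apply hom_ext
    set P : ℤ := ((p:ℕ):ℤ) with hP
    obtain ⟨A, B, hA, hB, hSN⟩ := sub_one_eq_N (p : ℕ)
    have hSx : Sψ (p:ℕ) (xx 4) = N 0 P A B := by rw [Sψ_x, hSN]
    obtain ⟨e2, e3⟩ := comm2 p
    rw [hu] at e2 e3
    have hcc : c P2 = 6*v - 4*u^2 + 2*u := by linarith
    rw [hcc] at e3
    have hb2 : 2*(b p) = 2*(P*(P-1)*u + A) := by linear_combination -e2 - hA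
    have hb : b p = P*(P-1)*u + A := by linarith
    rw [hb] at e3
    rw [RingHom.comp_apply, RingHom.comp_apply, hbc p, apply_N σh hσx, hσx,
      apply_N (Sψ (p:ℕ)) hSx, ← hP]
    have g2 : 6*(P*v + 2*(P*(P-1)*u + A)*u + c p) = 6*(B + 2*u*P*A + v*P^3) := by
      linear_combination -e3 + (2*u - 4*u*P + P - 2)*hA - hB
    apply N_congr
    · ring
    · ring
    · rw [hb]; ring
    · rw [hb]; linarith [g2]

end Aux

theorem stmt10 :
    (∃ S : AdamsFamily 4, ∀ p : Nat.Primes, S.ψ p (xx 4) = (1 + xx 4) ^ (p : ℕ) - 1) ∧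
    (∀ S R : AdamsFamily 4,
      (∀ p : Nat.Primes, S.ψ p (xx 4) = (1 + xx 4) ^ (p : ℕ) - 1) →
      (∀ p : Nat.Primes,
        R.ψ p (xx 4) - ((p : ℕ) : TP 4) * xx 4 ∈ Ideal.span {xx 4 ^ 2}) →
      AdamsIso R S) := by
  constructor
  · exact ⟨Aux.Sfam, fun p => Aux.Sψ_x (p : ℕ)⟩
  · intro S R hS hR
    obtain ⟨σ, h1, h2⟩ := Aux.uniqueness R hR
    refine ⟨σ, h1, fun p => ?_⟩
    have hSp : S.ψ p = Aux.Sψ (p : ℕ) := Aux.hom_ext (by rw [hS p, Aux.Sψ_x])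
    rw [hSp]
    exact h2 p
end
end

section
/- For k ∈ {1, 5} and d₂ ∈ {0, 2, 4, …, 58}, let S(k, d₂) be the family on ℤ[x]/(x⁴) given by ψ_2(x) = 4x + kx² + d₂x³ and, for each odd prime p, ψ_p(x) = p²x + (k·p²(p² − 1)/12)·x² + d_p·x³, where d_p = p²(p⁴ − 1)·d₂/60 + k²·p²(p² − 1)(p² − 4)/360 (these coefficients are integers). Then each of these sixty families S(k, d₂) is a filtered λ-ring structure on ℤ[x]/(x⁴), the sixty structures are mutually non-isomorphic, and every filtered λ-ring structure R on ℤ[x]/(x⁴) satisfying ψ_p^R(x) ≡ p²x (mod x²) for all primes p is isomorphic to one of them. -/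
open Polynomial

noncomputable section

/-- The coefficient `d_p = p²(p⁴ − 1)d₂/60 + k²p²(p² − 1)(p² − 4)/360`. -/
def dcoef (k d2 : ℤ) (p : ℕ) : ℤ :=
  (p : ℤ) ^ 2 * ((p : ℤ) ^ 4 - 1) * d2 / 60 +
    k ^ 2 * (p : ℤ) ^ 2 * ((p : ℤ) ^ 2 - 1) * ((p : ℤ) ^ 2 - 4) / 360

/-- The coefficient `c_p = k·p²(p² − 1)/12`. -/
def ccoef (k : ℤ) (p : ℕ) : ℤ := k * ((p : ℤ) ^ 2 * ((p : ℤ) ^ 2 - 1)) / 12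

/-- The family `S(k, d₂)`: `ψ_2(x) = 4x + kx² + d₂x³` and
`ψ_p(x) = p²x + (k·p²(p² − 1)/12)x² + d_p x³` for odd primes `p`. -/
def SpecKD (k d2 : ℤ) (S : AdamsFamily 4) : Prop :=
  S.ψ P2 (xx 4) = (4 : TP 4) * xx 4 + (k : TP 4) * xx 4 ^ 2 + (d2 : TP 4) * xx 4 ^ 3 ∧
  ∀ p : Nat.Primes, 2 < (p : ℕ) →
    S.ψ p (xx 4) = ((p : ℕ) : TP 4) ^ 2 * xx 4 + (ccoef k (p : ℕ) : TP 4) * xx 4 ^ 2 +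
      (dcoef k d2 (p : ℕ) : TP 4) * xx 4 ^ 3


set_option maxRecDepth 40000

namespace Work

local notation "x" => xx 4
local notation "mk" => Ideal.Quotient.mk (Ideal.span {(X : Polynomial ℤ) ^ 4})

/-- linear part -/
def ell (a b c : ℤ) : TP 4 := (a : TP 4) * x + (b : TP 4) * x ^ 2 + (c : TP 4) * x ^ 3

/-- general representative -/
def rep (a0 a1 a2 a3 : ℤ) : TP 4 := (a0 : TP 4) + ell a1 a2 a3

lemma hx4 : x ^ 4 = 0 := by
  show mk X ^ 4 = 0
  rw [← map_pow, Ideal.Quotient.eq_zero_iff_mem]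
  exact Ideal.subset_span rfl

lemma rep_eq_mk (a0 a1 a2 a3 : ℤ) :
    rep a0 a1 a2 a3 = mk (C a0 + C a1 * X + C a2 * X ^ 2 + C a3 * X ^ 3) := by
  have hC : ∀ a : ℤ, mk (C a) = (a : TP 4) := fun a => by
    rw [show (C a : Polynomial ℤ) = ((a : ℤ) : Polynomial ℤ) by simp, map_intCast]
  simp only [rep, ell, xx, map_add, map_mul, map_pow, hC]
  ring


lemma rep_inj {a0 a1 a2 a3 b0 b1 b2 b3 : ℤ}
    (h : rep a0 a1 a2 a3 = rep b0 b1 b2 b3) :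
    a0 = b0 ∧ a1 = b1 ∧ a2 = b2 ∧ a3 = b3 := by
  rw [rep_eq_mk, rep_eq_mk, Ideal.Quotient.eq, Ideal.mem_span_singleton,
    X_pow_dvd_iff] at h
  have h0 := h 0 (by norm_num)
  have h1 := h 1 (by norm_num)
  have h2 := h 2 (by norm_num)
  have h3 := h 3 (by norm_num)
  simp only [coeff_sub, coeff_add, coeff_C_mul, coeff_C, coeff_X_pow, coeff_X, coeff_one] at h0 h1 h2 h3
  norm_num at h0 h1 h2 h3
  exact ⟨by linarith, by linarith, by linarith, by linarith⟩

lemma surj_rep (a : TP 4) : ∃ a0 a1 a2 a3 : ℤ, a = rep a0 a1 a2 a3 := by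
  obtain ⟨f, rfl⟩ := Ideal.Quotient.mk_surjective a
  refine ⟨f.coeff 0, f.coeff 1, f.coeff 2, f.coeff 3, ?_⟩
  rw [rep_eq_mk, Ideal.Quotient.eq, Ideal.mem_span_singleton, X_pow_dvd_iff]
  intro d hd
  interval_cases d <;>
    · simp only [coeff_sub, coeff_add, coeff_C_mul, coeff_C, coeff_X_pow, coeff_X]
      norm_num

lemma ell_inj {a1 a2 a3 b1 b2 b3 : ℤ} (h : ell a1 a2 a3 = ell b1 b2 b3) :
    a1 = b1 ∧ a2 = b2 ∧ a3 = b3 := by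
  have : rep 0 a1 a2 a3 = rep 0 b1 b2 b3 := by
    simp only [rep, h]
  exact (rep_inj this).2

lemma ell_eq (a1 a2 a3 b1 b2 b3 : ℤ) (h1 : a1 = b1) (h2 : a2 = b2) (h3 : a3 = b3) :
    ell a1 a2 a3 = ell b1 b2 b3 := by rw [h1, h2, h3]

/-- the key workhorse: value of a ring hom on a linear element -/
lemma hom_apply_ell (φ : TP 4 →+* TP 4) (a b c : ℤ) (h : φ x = ell a b c)
    (t1 t2 t3 : ℤ) :
    φ (ell t1 t2 t3) = ell (t1 * a) (t1 * b + t2 * a ^ 2)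
      (t1 * c + 2 * t2 * a * b + t3 * a ^ 3) := by
  simp only [ell, map_add, map_mul, map_pow, map_intCast] at *
  rw [h]
  push_cast
  linear_combination (norm := (push_cast; ring1)) (((b^2*t2 + 2*a*c*t2 + 3*a^2*b*t3 : ℤ) : TP 4) + ((2*b*c*t2 + 3*a*b^2*t3 + 3*a^2*c*t3 : ℤ) : TP 4) * x + ((c^2*t2 + b^3*t3 + 6*a*b*c*t3 : ℤ) : TP 4) * x ^ 2 + ((3*b^2*c*t3 + 3*a*c^2*t3 : ℤ) : TP 4) * x ^ 3 + ((3*b*c^2*t3 : ℤ) : TP 4) * x ^ 4 + ((c^3*t3 : ℤ) : TP 4) * x ^ 5) * hx4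

lemma hom_ext {S : Type*} [Ring S] {φ ψ : TP 4 →+* S} (h : φ x = ψ x) : φ = ψ := by
  have hsurj : Function.Surjective (Ideal.Quotient.mk (Ideal.span {(X : Polynomial ℤ) ^ 4})) :=
    Ideal.Quotient.mk_surjective
  rw [← RingHom.cancel_right hsurj]
  refine ringHom_ext (fun a => ?_) h
  show φ (mk (C a)) = ψ (mk (C a))
  rw [show (C a : Polynomial ℤ) = ((a : ℤ) : Polynomial ℤ) by simp, map_intCast,
    map_intCast, map_intCast]

/-- The endomorphism of `ℤ[x]/(x⁴)` with `x ↦ a x + b x² + c x³`. -/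
def E (a b c : ℤ) : TP 4 →+* TP 4 :=
  Ideal.Quotient.lift _ ((aeval (ell a b c)).toRingHom : Polynomial ℤ →+* TP 4)
    (by
      intro f hf
      rw [Ideal.mem_span_singleton] at hf
      obtain ⟨g, rfl⟩ := hf
      have h4 : ell a b c ^ 4 = 0 := by
        have : ell a b c ^ 4 = ((a : TP 4) + (b:TP 4) * x + (c:TP 4) * x ^ 2) ^ 4 * x ^ 4 := by
          simp only [ell]; ring
        rw [this, hx4, mul_zero]
      simp only [map_mul, map_pow, AlgHom.toRingHom_eq_coe, RingHom.coe_coe, aeval_X, h4,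
        zero_mul])

@[simp] lemma E_x (a b c : ℤ) : E a b c x = ell a b c := by
  show E a b c (mk X) = _
  simp only [E, Ideal.Quotient.lift_mk, AlgHom.toRingHom_eq_coe, RingHom.coe_coe, aeval_X]

lemma E_ell (a b c t1 t2 t3 : ℤ) :
    E a b c (ell t1 t2 t3) = ell (t1 * a) (t1 * b + t2 * a ^ 2)
      (t1 * c + 2 * t2 * a * b + t3 * a ^ 3) :=
  hom_apply_ell _ a b c (E_x a b c) t1 t2 t3

lemma ell_eq_x_mul (a b c : ℤ) :
    ell a b c = x * ((a : TP 4) + (b : TP 4) * x + (c : TP 4) * x ^ 2) := by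
  simp only [ell]; ring

lemma ell_mem_span_x (a b c : ℤ) : ell a b c ∈ Ideal.span {x} := by
  rw [Ideal.mem_span_singleton]
  exact ⟨_, ell_eq_x_mul a b c⟩

lemma mem_span_x {v : TP 4} (h : v ∈ Ideal.span {x}) :
    ∃ a b c : ℤ, v = ell a b c := by
  rw [Ideal.mem_span_singleton] at h
  obtain ⟨t, rfl⟩ := h
  obtain ⟨t0, t1, t2, t3, rfl⟩ := surj_rep t
  refine ⟨t0, t1, t2, ?_⟩
  simp only [rep, ell]
  linear_combination ((t3 : TP 4)) * hx4

lemma mem_span_xsq {a b c : ℤ} (h : ell a b c ∈ Ideal.span {x ^ 2}) : a = 0 := by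
  rw [Ideal.mem_span_singleton] at h
  obtain ⟨t, ht⟩ := h
  obtain ⟨t0, t1, t2, t3, rfl⟩ := surj_rep t
  have : ell a b c = ell 0 t0 t1 := by
    rw [ht]
    simp only [rep, ell]
    push_cast
    linear_combination ((t2:TP 4) + (t3:TP 4) * x) * hx4
  exact (ell_inj this).1

lemma mem_span_cast {a b c : ℤ} {m : ℤ} (h : ell a b c ∈ Ideal.span {(m : TP 4)}) :
    m ∣ a ∧ m ∣ b ∧ m ∣ c := by
  rw [Ideal.mem_span_singleton] at h
  obtain ⟨t, ht⟩ := h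
  obtain ⟨t0, t1, t2, t3, rfl⟩ := surj_rep t
  have : rep 0 a b c = rep (m * t0) (m * t1) (m * t2) (m * t3) := by
    rw [show rep 0 a b c = ell a b c by simp [rep], ht]
    simp only [rep, ell]
    push_cast
    ring
  obtain ⟨-, h1, h2, h3⟩ := rep_inj this
  exact ⟨⟨t1, h1⟩, ⟨t2, h2⟩, ⟨t3, h3⟩⟩

lemma mem_span_cast' {a b c : ℤ} {m : ℤ} (h1 : m ∣ a) (h2 : m ∣ b) (h3 : m ∣ c) :
    ell a b c ∈ Ideal.span {(m : TP 4)} := by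
  obtain ⟨a', rfl⟩ := h1
  obtain ⟨b', rfl⟩ := h2
  obtain ⟨c', rfl⟩ := h3
  rw [Ideal.mem_span_singleton]
  refine ⟨ell a' b' c', ?_⟩
  simp only [ell]
  push_cast
  ring

lemma dvd12 (n : ℤ) : (12:ℤ) ∣ n^2*(n^2-1) := by
  have h := ZMod.intCast_zmod_eq_zero_iff_dvd (n^2*(n^2-1)) 12
  rw [show ((12:ℕ):ℤ) = (12:ℤ) by norm_num] at h
  rw [← h]; push_cast
  generalize ((n : ZMod 12)) = m
  revert m; decide

lemma dvd30 (n : ℤ) : (30:ℤ) ∣ n^2*(n^4-1) := by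
  have h := ZMod.intCast_zmod_eq_zero_iff_dvd (n^2*(n^4-1)) 30
  rw [show ((30:ℕ):ℤ) = (30:ℤ) by norm_num] at h
  rw [← h]; push_cast
  generalize ((n : ZMod 30)) = m
  revert m; decide

lemma dvd360 (n : ℤ) : (360:ℤ) ∣ n^2*(n^2-1)*(n^2-4) := by
  have h := ZMod.intCast_zmod_eq_zero_iff_dvd (n^2*(n^2-1)*(n^2-4)) 360
  rw [show ((360:ℕ):ℤ) = (360:ℤ) by norm_num] at h
  rw [← h]; push_cast
  generalize ((n : ZMod 360)) = m
  revert m; decide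

lemma dvd12' (k : ℤ) (n : ℤ) : (12:ℤ) ∣ k * (n^2*(n^2-1)) :=
  Dvd.dvd.mul_left (dvd12 n) k

lemma dvd60' (n d2 : ℤ) (he : Even d2) : (60:ℤ) ∣ n^2*(n^4-1)*d2 := by
  obtain ⟨w, hw⟩ := dvd30 n
  obtain ⟨e, he⟩ := he
  exact ⟨w * e, by linear_combination d2 * hw + 30 * w * he⟩

lemma dvd360' (k n : ℤ) : (360:ℤ) ∣ k^2*n^2*(n^2-1)*(n^2-4) := by
  obtain ⟨w, hw⟩ := dvd360 n
  exact ⟨k^2 * w, by linear_combination k^2 * hw⟩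

lemma ccoef_mul (k : ℤ) (p : ℕ) :
    12 * ccoef k p = k * ((p:ℤ)^2*((p:ℤ)^2-1)) :=
  Int.mul_ediv_cancel' (dvd12' k (p:ℤ))

lemma dcoef_mul (k d2 : ℤ) (he : Even d2) (p : ℕ) :
    360 * dcoef k d2 p =
      6 * ((p:ℤ)^2*((p:ℤ)^4-1)*d2) + k^2*(p:ℤ)^2*((p:ℤ)^2-1)*((p:ℤ)^2-4) := by
  have h1 : (60:ℤ) ∣ (p:ℤ)^2*((p:ℤ)^4-1)*d2 := dvd60' _ _ he
  have h2 : (360:ℤ) ∣ k^2*(p:ℤ)^2*((p:ℤ)^2-1)*((p:ℤ)^2-4) := dvd360' k _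
  have e1 := Int.mul_ediv_cancel' h1
  have e2 := Int.mul_ediv_cancel' h2
  unfold dcoef
  rw [mul_add]
  rw [show (360:ℤ) * ((p:ℤ)^2*((p:ℤ)^4-1)*d2 / 60) = 6 * (60 * ((p:ℤ)^2*((p:ℤ)^4-1)*d2 / 60)) by ring]
  rw [e1]
  rw [show k ^ 2 * (p:ℤ) ^ 2 * ((p:ℤ) ^ 2 - 1) * ((p:ℤ) ^ 2 - 4) / 360
      = (k ^ 2 * (p:ℤ) ^ 2 * ((p:ℤ) ^ 2 - 1) * ((p:ℤ) ^ 2 - 4)) / 360 by norm_num]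
  rw [e2]

lemma E_comp_E (a b c a' b' c' : ℤ) :
    (E a b c).comp (E a' b' c') =
      E (a' * a) (a' * b + b' * a ^ 2) (a' * c + 2 * b' * a * b + c' * a ^ 3) := by
  apply hom_ext
  simp only [RingHom.comp_apply, E_x, E_ell]

lemma E_maps_ideal (a b c : ℤ) : ∀ v ∈ Ideal.span {x}, E a b c v ∈ Ideal.span {x} := by
  intro v hv
  obtain ⟨t1, t2, t3, rfl⟩ := mem_span_x hv
  rw [E_ell]
  exact ell_mem_span_x _ _ _

/-- constant coefficient -/
def eps : TP 4 →+* ℤ :=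
  Ideal.Quotient.lift _ (evalRingHom 0)
    (by
      intro f hf
      rw [Ideal.mem_span_singleton] at hf
      obtain ⟨g, rfl⟩ := hf
      simp)

lemma charP_quot (p : ℕ) (hp : 0 < p) :
    CharP (TP 4 ⧸ Ideal.span {((p:ℕ) : TP 4)}) p := by
  constructor
  intro n
  rw [show ((n : TP 4 ⧸ Ideal.span {((p:ℕ) : TP 4)})) =
    Ideal.Quotient.mk _ ((n : TP 4)) by push_cast; rfl]
  rw [Ideal.Quotient.eq_zero_iff_mem, Ideal.mem_span_singleton]
  constructor
  · rintro ⟨t, ht⟩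
    have := congrArg eps ht
    rw [map_mul, map_natCast, map_natCast] at this
    have : (n:ℤ) = (p:ℤ) * eps t := this
    have hdvd : (p:ℤ) ∣ (n:ℤ) := ⟨eps t, this⟩
    exact_mod_cast hdvd
  · rintro ⟨m, rfl⟩
    exact ⟨(m : TP 4), by push_cast; ring⟩

lemma frob_reduce {p : ℕ} (hp : p.Prime) (φ : TP 4 →+* TP 4)
    (h : φ x - x ^ p ∈ Ideal.span {((p:ℕ) : TP 4)}) :
    ∀ a : TP 4, φ a - a ^ p ∈ Ideal.span {((p:ℕ) : TP 4)} := by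
  intro a
  set J : Ideal (TP 4) := Ideal.span {((p:ℕ) : TP 4)} with hJ
  haveI : CharP (TP 4 ⧸ J) p := charP_quot p hp.pos
  haveI : ExpChar (TP 4 ⧸ J) p := ExpChar.prime hp
  set π : TP 4 →+* TP 4 ⧸ J := Ideal.Quotient.mk J with hπ
  have key : π.comp φ = (frobenius (TP 4 ⧸ J) p).comp π := by
    apply hom_ext
    simp only [RingHom.comp_apply, frobenius_def, ← map_pow]
    exact (Ideal.Quotient.eq).2 h
  have := congrArg (fun ψ => ψ a) key
  simp only [RingHom.comp_apply, frobenius_def, ← map_pow] at this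
  exact (Ideal.Quotient.eq).1 this

lemma cast_nat_TP (m : ℕ) : ((m : ℕ) : TP 4) = (((m : ℕ) : ℤ) : TP 4) := by push_cast; rfl

lemma prime_not_dvd_12 {p : ℕ} (hp : p.Prime) (h5 : 5 ≤ p) : ¬ ((p:ℤ) ∣ (12:ℤ)) := by
  intro hd
  have hd' : p ∣ 12 := by exact_mod_cast hd
  rw [show (12:ℕ) = 2^2*3 by norm_num] at hd'
  rcases (Nat.Prime.dvd_mul hp).1 hd' with h | h
  · have h2 := Nat.Prime.dvd_of_dvd_pow hp h
    have := Nat.le_of_dvd (by norm_num) h2; omega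
  · have := Nat.le_of_dvd (by norm_num) h; omega

lemma prime_not_dvd_360 {p : ℕ} (hp : p.Prime) (h5 : 7 ≤ p) : ¬ ((p:ℤ) ∣ (360:ℤ)) := by
  intro hd
  have hd' : p ∣ 360 := by exact_mod_cast hd
  rw [show (360:ℕ) = 2^3*(3^2*5) by norm_num] at hd'
  rcases (Nat.Prime.dvd_mul hp).1 hd' with h | h
  · have h2 := Nat.Prime.dvd_of_dvd_pow hp h
    have := Nat.le_of_dvd (by norm_num) h2; omega
  · rcases (Nat.Prime.dvd_mul hp).1 h with h2 | h2
    · have h3 := Nat.Prime.dvd_of_dvd_pow hp h2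
      have := Nat.le_of_dvd (by norm_num) h3; omega
    · have := Nat.le_of_dvd (by norm_num) h2; omega

lemma dcoef_five (k d2 : ℤ) : dcoef k d2 5 = 260 * d2 + 35 * k ^ 2 := by
  unfold dcoef
  rw [show ((5:ℕ):ℤ)^2*(((5:ℕ):ℤ)^4-1)*d2 = 60 * (260 * d2) by push_cast; ring]
  rw [show k^2*((5:ℕ):ℤ)^2*(((5:ℕ):ℤ)^2-1)*(((5:ℕ):ℤ)^2-4) = 360 * (35 * k^2) by push_cast; ring]
  rw [Int.mul_ediv_cancel_left _ (by norm_num : (60:ℤ) ≠ 0),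
    Int.mul_ediv_cancel_left _ (by norm_num : (360:ℤ) ≠ 0)]

lemma ccoef_two (k : ℤ) : ccoef k 2 = k := by
  unfold ccoef
  rw [show ((2:ℕ):ℤ)^2*(((2:ℕ):ℤ)^2-1) = 12 by norm_num]
  rw [show k * 12 = 12 * k by ring]
  exact Int.mul_ediv_cancel_left k (by norm_num)

lemma dcoef_two (k d2 : ℤ) : dcoef k d2 2 = d2 := by
  unfold dcoef
  rw [show ((2:ℕ):ℤ)^2*(((2:ℕ):ℤ)^4-1)*d2 = 60 * d2 by push_cast; ring]
  rw [show k^2*((2:ℕ):ℤ)^2*(((2:ℕ):ℤ)^2-1)*(((2:ℕ):ℤ)^2-4) = 360 * 0 by push_cast; ring]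
  rw [Int.mul_ediv_cancel_left d2 (by norm_num), Int.mul_ediv_cancel_left (0:ℤ) (by norm_num)]
  ring

lemma ccoef_three (k : ℤ) : ccoef k 3 = 6 * k := by
  unfold ccoef
  rw [show ((3:ℕ):ℤ)^2*(((3:ℕ):ℤ)^2-1) = 72 by norm_num]
  rw [show k * 72 = 12 * (6 * k) by ring]
  exact Int.mul_ediv_cancel_left _ (by norm_num)

lemma dcoef_three (k d2 : ℤ) : dcoef k d2 3 = 12 * d2 + k ^ 2 := by
  unfold dcoef
  rw [show ((3:ℕ):ℤ)^2*(((3:ℕ):ℤ)^4-1)*d2 = 60 * (12 * d2) by push_cast; ring]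
  rw [show k^2*((3:ℕ):ℤ)^2*(((3:ℕ):ℤ)^2-1)*(((3:ℕ):ℤ)^2-4) = 360 * k^2 by push_cast; ring]
  rw [Int.mul_ediv_cancel_left _ (by norm_num : (60:ℤ) ≠ 0),
    Int.mul_ediv_cancel_left _ (by norm_num : (360:ℤ) ≠ 0)]

/-- The model family. -/
def famS (k d2 : ℤ) (hk : k = 1 ∨ k = 5) (he : Even d2) : AdamsFamily 4 where
  ψ p := E (((p:ℕ):ℤ)^2) (ccoef k (p:ℕ)) (dcoef k d2 (p:ℕ))
  maps_ideal p := E_maps_ideal _ _ _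
  comm p q := by
    rw [E_comp_E, E_comp_E]
    have h1 := ccoef_mul k (p:ℕ)
    have h2 := ccoef_mul k (q:ℕ)
    have h3 := dcoef_mul k d2 he (p:ℕ)
    have h4 := dcoef_mul k d2 he (q:ℕ)
    set s := ((p:ℕ):ℤ)
    set t := ((q:ℕ):ℤ)
    have e1 : t^2 * s^2 = s^2 * t^2 := by ring
    have e2 : t^2 * ccoef k (p:ℕ) + ccoef k (q:ℕ) * (s^2)^2
        = s^2 * ccoef k (q:ℕ) + ccoef k (p:ℕ) * (t^2)^2 := by
      apply mul_left_cancel₀ (show (12:ℤ) ≠ 0 by norm_num)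
      linear_combination (t^2-t^4) * h1 + (s^4-s^2) * h2
    have e3 : t^2 * dcoef k d2 (p:ℕ) + 2 * ccoef k (q:ℕ) * s^2 * ccoef k (p:ℕ)
          + dcoef k d2 (q:ℕ) * (s^2)^3
        = s^2 * dcoef k d2 (q:ℕ) + 2 * ccoef k (p:ℕ) * t^2 * ccoef k (q:ℕ)
          + dcoef k d2 (p:ℕ) * (t^2)^3 := by
      apply mul_left_cancel₀ (show (360:ℤ) ≠ 0 by norm_num)
      linear_combination (t^2-t^6) * h3 + (s^6-s^2) * h4
        + 60*(s^2-t^2) * ccoef k (q:ℕ) * h1 + 5*(s^2-t^2)*k*(s^2*(s^2-1)) * h2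
    rw [e1, e2, e3]
  frob := by
    intro p a
    apply frob_reduce p.2 _ _ a
    rw [cast_nat_TP]
    by_cases hp2 : (p:ℕ) = 2
    · rw [hp2, ccoef_two, dcoef_two, E_x,
        show (((2:ℕ):ℤ)^2) = (4:ℤ) by norm_num]
      have : ell 4 k d2 - x ^ 2 = ell 4 (k - 1) d2 := by
        simp only [ell]; push_cast; ring
      rw [this]
      exact mem_span_cast' (by norm_num) (by rcases hk with h|h <;> omega)
        (by obtain ⟨e, he⟩ := he; omega)
    · by_cases hp3 : (p:ℕ) = 3
      · rw [hp3, ccoef_three, dcoef_three, E_x]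
        have : ell ((3:ℤ)^2) (6*k) (12*d2+k^2) - x ^ 3
            = ell 9 (6*k) (12*d2+k^2-1) := by
          simp only [ell]; push_cast; ring
        rw [show (((3:ℕ):ℤ)^2) = (3:ℤ)^2 by norm_num, this]
        exact mem_span_cast' (by norm_num) (⟨2*k, by ring⟩)
          (by rcases hk with h|h <;> subst h
              · exact ⟨4*d2, by ring⟩
              · exact ⟨4*d2+8, by ring⟩)
      · -- p ≥ 5
        have h5 : 5 ≤ (p:ℕ) := by
          have h2 := p.2.two_le
          have h4 : (p:ℕ) ≠ 4 := by
            intro h; have hh := p.2; rw [h] at hh; norm_num at hh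
          omega
        have hxp : x ^ (p:ℕ) = 0 := by
          rw [show (p:ℕ) = 4 + ((p:ℕ) - 4) by omega, pow_add, hx4, zero_mul]
        rw [E_x, hxp, sub_zero]
        set s := ((p:ℕ):ℤ) with hs
        have hsp : Prime s := Nat.prime_iff_prime_int.1 p.2
        have hn12 : ¬ (s ∣ (12:ℤ)) := prime_not_dvd_12 p.2 h5
        have hd1 : s ∣ s^2 := ⟨s, by ring⟩
        have hd2 : s ∣ ccoef k (p:ℕ) := by
          have : s ∣ 12 * ccoef k (p:ℕ) := by
            rw [ccoef_mul]; exact ⟨k*(s*(s^2-1)), by ring⟩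
          rcases (Prime.dvd_mul hsp).1 this with h | h
          · exact absurd h hn12
          · exact h
        have hd3 : s ∣ dcoef k d2 (p:ℕ) := by
          by_cases hp5 : (p:ℕ) = 5
          · rw [hp5, dcoef_five, hs, hp5]
            exact ⟨52*d2+7*k^2, by push_cast; ring⟩
          · have h7 : 7 ≤ (p:ℕ) := by
              have h6 : (p:ℕ) ≠ 6 := by
                intro h; have hh := p.2; rw [h] at hh; norm_num at hh
              omega
            have hn360 : ¬ (s ∣ (360:ℤ)) := prime_not_dvd_360 p.2 h7
            have : s ∣ 360 * dcoef k d2 (p:ℕ) := by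
              rw [dcoef_mul k d2 he]
              exact ⟨6*(s*(s^4-1)*d2) + k^2*s*(s^2-1)*(s^2-4), by ring⟩
            rcases (Prime.dvd_mul hsp).1 this with h | h
            · exact absurd h hn360
            · exact h
        exact mem_span_cast' hd1 hd2 hd3

lemma spec_ell (k d2 : ℤ) :
    (4 : TP 4) * x + (k : TP 4) * x ^ 2 + (d2 : TP 4) * x ^ 3 = ell 4 k d2 := by
  simp only [ell]; push_cast; ring

lemma x_eq_rep : x = rep 0 1 0 0 := by
  simp only [rep, ell]; push_cast; ring

lemma famS_spec (k d2 : ℤ) (hk : k = 1 ∨ k = 5) (he : Even d2) :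
    SpecKD k d2 (famS k d2 hk he) := by
  constructor
  · show E (((P2:ℕ):ℤ)^2) (ccoef k (P2:ℕ)) (dcoef k d2 (P2:ℕ)) x = _
    rw [show ((P2:ℕ)) = 2 from rfl, ccoef_two, dcoef_two, E_x,
      show (((2:ℕ):ℤ)^2) = (4:ℤ) by norm_num, spec_ell]
  · intro p hp
    show E (((p:ℕ):ℤ)^2) (ccoef k (p:ℕ)) (dcoef k d2 (p:ℕ)) x = _
    rw [E_x]
    simp only [ell]
    push_cast
    ring

lemma sigma_x_form (σ : TP 4 ≃+* TP 4)
    (hmap : (Ideal.span {x}).map σ.toRingHom = Ideal.span {x}) :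
    ∃ u1 u2 u3 : ℤ, (u1 = 1 ∨ u1 = -1) ∧ σ x = ell u1 u2 u3 := by
  have hx : x ∈ Ideal.span {x} := Ideal.subset_span rfl
  have hσx : σ.toRingHom x ∈ (Ideal.span {x}).map σ.toRingHom :=
    Ideal.mem_map_of_mem _ hx
  rw [hmap] at hσx
  obtain ⟨u1, u2, u3, hu⟩ := mem_span_x hσx
  refine ⟨u1, u2, u3, ?_, hu⟩
  obtain ⟨t, ht⟩ := σ.surjective x
  obtain ⟨t0, t1, t2, t3, rfl⟩ := surj_rep t
  have hx' : σ.toRingHom (rep t0 t1 t2 t3) = x := ht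
  rw [show rep t0 t1 t2 t3 = (t0 : TP 4) + ell t1 t2 t3 from rfl] at hx'
  rw [map_add, map_intCast, hom_apply_ell σ.toRingHom u1 u2 u3 hu] at hx'
  have : rep t0 (t1*u1) (t1*u2 + t2*u1^2) (t1*u3 + 2*t2*u1*u2 + t3*u1^3)
      = rep 0 1 0 0 := by
    rw [← x_eq_rep, ← hx']; rfl
  obtain ⟨-, h1, -, -⟩ := rep_inj this
  have : IsUnit u1 := IsUnit.of_mul_eq_one (a := u1) t1 (by linarith)
  exact Int.isUnit_iff.1 this

lemma part2 (k d2 k' d2' : ℤ) (hk : k = 1 ∨ k = 5) (he : Even d2) (h0 : 0 ≤ d2)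
    (h58 : d2 ≤ 58) (hk' : k' = 1 ∨ k' = 5) (he' : Even d2') (h0' : 0 ≤ d2')
    (h58' : d2' ≤ 58) (S S' : AdamsFamily 4) (hS : SpecKD k d2 S)
    (hS' : SpecKD k' d2' S') (hne : (k, d2) ≠ (k', d2')) : ¬ AdamsIso S S' := by
  rintro ⟨σ, hmap, hcomm⟩
  obtain ⟨u1, u2, u3, hu1, hu⟩ := sigma_x_form σ hmap
  have hψ : S.ψ P2 x = ell 4 k d2 := by rw [hS.1, spec_ell]
  have hψ' : S'.ψ P2 x = ell 4 k' d2' := by rw [hS'.1, spec_ell]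
  have h := congrArg (fun φ : TP 4 →+* TP 4 => φ x) (hcomm P2)
  simp only [RingHom.comp_apply] at h
  rw [hψ, hom_apply_ell σ.toRingHom u1 u2 u3 hu 4 k d2] at h
  rw [show σ.toRingHom x = ell u1 u2 u3 from hu,
    hom_apply_ell (S'.ψ P2) 4 k' d2' hψ' u1 u2 u3] at h
  obtain ⟨h1, h2, h3⟩ := ell_inj h
  have hne' : k ≠ k' ∨ d2 ≠ d2' := by
    by_contra hc
    push_neg at hc
    exact hne (by rw [hc.1, hc.2])
  rcases hk with rfl | rfl <;> rcases hk' with rfl | rfl <;>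
    rcases hu1 with rfl | rfl <;>
    norm_num at h2 h3 <;>
    rcases hne' with h | h <;>
    omega

lemma spec_ell2 (p : ℕ) (A B : ℤ) :
    ((p : ℕ) : TP 4)^2 * x + (A : TP 4) * x ^ 2 + (B : TP 4) * x ^ 3
      = ell (((p:ℕ):ℤ)^2) A B := by
  simp only [ell]; push_cast; ring

lemma part3 (R : AdamsFamily 4)
    (h : ∀ p : Nat.Primes, R.ψ p x - ((p:ℕ) : TP 4)^2 * x ∈ Ideal.span {x ^ 2}) :
    ∃ (k d2 : ℤ) (S : AdamsFamily 4), (k = 1 ∨ k = 5) ∧ Even d2 ∧ 0 ≤ d2 ∧ d2 ≤ 58 ∧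
      SpecKD k d2 S ∧ AdamsIso R S := by
  have key : ∀ p : Nat.Primes, ∃ Bp Cp : ℤ, R.ψ p x = ell (((p:ℕ):ℤ)^2) Bp Cp := by
    intro p
    have hx : x ∈ Ideal.span {x} := Ideal.subset_span rfl
    obtain ⟨t1, t2, t3, ht⟩ := mem_span_x (R.maps_ideal p x hx)
    have h2 := h p
    rw [ht, show ell t1 t2 t3 - ((p:ℕ):TP 4)^2 * x = ell (t1 - ((p:ℕ):ℤ)^2) t2 t3
      by simp only [ell]; push_cast; ring] at h2
    have h0 := mem_span_xsq h2
    exact ⟨t2, t3, by rw [ht, show t1 = (((p:ℕ):ℤ))^2 by linarith]⟩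
  choose B C hBC using key
  set b := B P2 with hbdef
  set c := C P2 with hcdef
  have hψ2 : R.ψ P2 x = ell 4 b c := by
    rw [hBC P2, show ((P2:ℕ)) = 2 from rfl]
    norm_num; rfl
  -- frobenius at 2
  have hf2 := R.frob P2 x
  rw [show ((P2:ℕ)) = 2 from rfl] at hf2
  rw [show R.ψ P2 x - x ^ 2 = ell 4 (b-1) c by
    rw [hψ2]; simp only [ell]; push_cast; ring] at hf2
  rw [show ((2:ℕ):TP 4) = ((2:ℤ):TP 4) by norm_num] at hf2
  obtain ⟨-, hbodd, hceven⟩ := mem_span_cast hf2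
  -- commutation relations with ψ2
  have hcm : ∀ p : Nat.Primes,
      12 * B p = ((((p:ℕ):ℤ))^4 - (((p:ℕ):ℤ))^2) * b ∧
      60 * C p = ((((p:ℕ):ℤ))^6 - (((p:ℕ):ℤ))^2) * c
        + 2 * b * B p * ((((p:ℕ):ℤ))^2 - 4) := by
    intro p
    have hcp := congrArg (fun φ : TP 4 →+* TP 4 => φ x) (R.comm P2 p)
    simp only [RingHom.comp_apply] at hcp
    rw [hBC p, hom_apply_ell (R.ψ P2) 4 b c hψ2] at hcp
    rw [hψ2, hom_apply_ell (R.ψ p) ((((p:ℕ):ℤ))^2) (B p) (C p) (hBC p)] at hcp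
    obtain ⟨h1, h2, h3⟩ := ell_inj hcp
    constructor
    · linear_combination h2
    · linear_combination h3
  -- frobenius at 3
  have hψ3 : R.ψ P3 x = ell 9 (B P3) (C P3) := by
    rw [hBC P3, show ((P3:ℕ)) = 3 from rfl]
    norm_num
  have hf3 := R.frob P3 x
  rw [show ((P3:ℕ)) = 3 from rfl] at hf3
  rw [show R.ψ P3 x - x ^ 3 = ell 9 (B P3) (C P3 - 1) by
    rw [hψ3]; simp only [ell]; push_cast; ring] at hf3
  rw [show ((3:ℕ):TP 4) = ((3:ℤ):TP 4) by norm_num] at hf3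
  obtain ⟨-, -, hC3⟩ := mem_span_cast hf3
  -- C P3 = 12 c + b^2
  have hB3 : B P3 = 6 * b := by
    have hi := (hcm P3).1
    rw [show ((P3:ℕ)) = 3 from rfl] at hi
    norm_num at hi
    omega
  have hC3eq : C P3 = 12 * c + b ^ 2 := by
    have hii := (hcm P3).2
    rw [show ((P3:ℕ)) = 3 from rfl, hB3] at hii
    norm_num at hii
    apply mul_left_cancel₀ (show (60:ℤ) ≠ 0 by norm_num)
    linear_combination hii
  -- 3 does not divide b
  have hb3 : ¬ ((3:ℤ) ∣ b) := by
    intro hd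
    obtain ⟨b', hb'⟩ := hd
    rw [hC3eq, hb'] at hC3
    obtain ⟨m, hm⟩ := hC3
    have hsq : (3*b')^2 = 9 * b'^2 := by ring
    rw [hsq] at hm
    have : 12 * c + 9 * b'^2 - 1 = 3 * m := hm
    generalize b'^2 = w at this
    omega
  have hbmod : b % 12 = 1 ∨ b % 12 = 5 ∨ b % 12 = 7 ∨ b % 12 = 11 := by omega
  obtain ⟨u1, k, hk, hu1, hdvd⟩ :
      ∃ u1 k : ℤ, (k = 1 ∨ k = 5) ∧ (u1 = 1 ∨ u1 = -1) ∧ 12 ∣ b - u1 * k := by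
    rcases hbmod with hmm|hmm|hmm|hmm
    · exact ⟨1, 1, Or.inl rfl, Or.inl rfl, by omega⟩
    · exact ⟨1, 5, Or.inr rfl, Or.inl rfl, by omega⟩
    · exact ⟨-1, 5, Or.inr rfl, Or.inr rfl, by omega⟩
    · exact ⟨-1, 1, Or.inl rfl, Or.inr rfl, by omega⟩
  have hsq' : u1 * u1 = 1 := by rcases hu1 with rfl | rfl <;> norm_num
  obtain ⟨u2, hu2⟩ := hdvd
  have hk12 : b = u1 * k + 12 * u2 := by linarith
  set m := c + 2*b*u2 - 8*u1*k*u2 with hmdef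
  set d2 := m % 60 with hd2def
  set u3 := u1 * (m / 60) with hu3def
  have hm : c + 2*b*u2 - 8*u1*k*u2 = d2 + 60 * (u1 * u3) := by
    have h1 := Int.mul_ediv_add_emod m 60
    rw [hu3def, hd2def]
    rw [show u1 * (u1 * (m / 60)) = (u1*u1) * (m/60) by ring, hsq']
    omega
  have hmeven : (2:ℤ) ∣ m := by
    obtain ⟨w, hw⟩ : ∃ w, m = c + 2 * w := ⟨b*u2 - 4*u1*k*u2, by rw [hmdef]; ring⟩
    omega
  have hd2even : Even d2 := by
    rw [Int.even_iff]
    omega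
  have hd2lb : 0 ≤ d2 := Int.emod_nonneg m (by norm_num)
  have hd2ub : d2 ≤ 58 := by
    have := Int.emod_lt_of_pos m (show (0:ℤ) < 60 by norm_num)
    have h2 : (2:ℤ) ∣ d2 := by rw [hd2def]; omega
    omega
  -- the automorphism
  obtain ⟨v1, v2, v3, hv1, hv2, hv3⟩ :
      ∃ v1 v2 v3 : ℤ, v1 = u1 ∧ v2 = -u1*u2 ∧ v3 = 2*u1*u2^2 - u3 :=
    ⟨_, _, _, rfl, rfl, rfl⟩
  have hEuv : (E u1 u2 u3).comp (E v1 v2 v3) = RingHom.id _ := by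
    rw [E_comp_E]
    apply hom_ext
    rw [E_x, RingHom.id_apply]
    rw [show v1*u1 = 1 by rw [hv1]; exact hsq',
      show v1*u2 + v2*u1^2 = 0 by rw [hv1, hv2]; linear_combination (-u1*u2) * hsq',
      show v1*u3 + 2*v2*u1*u2 + v3*u1^3 = 0 by
        rw [hv1, hv2, hv3]; linear_combination (2*u1^2*u2^2 - u3*u1) * hsq']
    simp only [ell]; push_cast; ring
  have hEvu : (E v1 v2 v3).comp (E u1 u2 u3) = RingHom.id _ := by
    rw [E_comp_E]
    apply hom_ext
    rw [E_x, RingHom.id_apply]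
    rw [show u1*v1 = 1 by rw [hv1]; exact hsq',
      show u1*v2 + u2*v1^2 = 0 by rw [hv1, hv2]; ring,
      show u1*v3 + 2*u2*v1*v2 + u3*v1^3 = 0 by
        rw [hv1, hv2, hv3]; linear_combination (u3*u1) * hsq']
    simp only [ell]; push_cast; ring
  have hEuv' : ∀ y, E u1 u2 u3 (E v1 v2 v3 y) = y := fun y => RingHom.congr_fun hEuv y
  have hEvu' : ∀ y, E v1 v2 v3 (E u1 u2 u3 y) = y := fun y => RingHom.congr_fun hEvu y
  set σ : TP 4 ≃+* TP 4 := RingEquiv.ofRingHom (E u1 u2 u3) (E v1 v2 v3) hEuv hEvu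
    with hσdef
  have hσ : σ.toRingHom = E u1 u2 u3 := rfl
  -- the conjugated family
  set S : AdamsFamily 4 :=
    { ψ := fun p => ((E u1 u2 u3).comp (R.ψ p)).comp (E v1 v2 v3)
      maps_ideal := fun p a ha =>
        E_maps_ideal _ _ _ _ (R.maps_ideal p _ (E_maps_ideal _ _ _ _ ha))
      comm := by
        intro p q
        apply RingHom.ext
        intro a
        simp only [RingHom.comp_apply]
        rw [hEvu', hEvu']
        rw [show R.ψ p (R.ψ q (E v1 v2 v3 a)) = R.ψ q (R.ψ p (E v1 v2 v3 a)) from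
          RingHom.congr_fun (R.comm p q) (E v1 v2 v3 a)]
      frob := by
        intro p a
        have hfr := R.frob p (E v1 v2 v3 a)
        rw [Ideal.mem_span_singleton] at hfr ⊢
        obtain ⟨w, hw⟩ := hfr
        refine ⟨E u1 u2 u3 w, ?_⟩
        simp only [RingHom.comp_apply]
        calc ((E u1 u2 u3) (R.ψ p (E v1 v2 v3 a))) - a ^ (p:ℕ)
            = E u1 u2 u3 (R.ψ p (E v1 v2 v3 a) - (E v1 v2 v3 a) ^ (p:ℕ)) := by
              rw [map_sub, map_pow, hEuv' a]
          _ = E u1 u2 u3 (((p:ℕ) : TP 4) * w) := by rw [hw]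
          _ = ((p:ℕ):TP 4) * E u1 u2 u3 w := by rw [map_mul, map_natCast] }
    with hSdef
  refine ⟨k, d2, S, hk, hd2even, hd2lb, hd2ub, ⟨?_, ?_⟩, σ, ?_, ?_⟩
  · -- SpecKD at 2
    show E u1 u2 u3 (R.ψ P2 (E v1 v2 v3 x)) = _
    rw [E_x, hom_apply_ell (R.ψ P2) 4 b c hψ2,
      hom_apply_ell (E u1 u2 u3) u1 u2 u3 (E_x u1 u2 u3), spec_ell]
    rw [show (v1*4)*u1 = 4 by rw [hv1]; linear_combination (4:ℤ) * hsq']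
    rw [show (v1*4)*u2 + (v1*b + v2*4^2)*u1^2 = k by
      rw [hv1, hv2]
      linear_combination (u1^3) * hk12 + (k - 4*u1*u2 + u1^2*k) * hsq']
    rw [show (v1*4)*u3 + 2*(v1*b + v2*4^2)*u1*u2 + (v1*c + 2*v2*4*b + v3*4^3)*u1^3 = d2 by
      rw [hv1, hv2, hv3]
      linear_combination (u1^4) * hm + (2*u1^2*u2 - 10*u1^4*u2) * hk12
        + (d2 - 4*u1*u3 + u1^2*d2 + 8*u1^2*u2^2 + 60*u1^3*u3 - 2*u1^3*u2*k) * hsq']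
  · -- SpecKD at odd p
    intro p hp
    show E u1 u2 u3 (R.ψ p (E v1 v2 v3 x)) = _
    have hi := (hcm p).1
    have hii := (hcm p).2
    set s : ℤ := (((p:ℕ):ℤ)) with hsdef
    rw [E_x, hom_apply_ell (R.ψ p) (s^2) (B p) (C p) (hBC p),
      hom_apply_ell (E u1 u2 u3) u1 u2 u3 (E_x u1 u2 u3), spec_ell2]
    rw [show (v1*s^2)*u1 = s^2 by rw [hv1]; linear_combination (s^2) * hsq']
    rw [show (v1*s^2)*u2 + (v1*B p + v2*(s^2)^2)*u1^2 = ccoef k (p:ℕ) by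
      apply mul_left_cancel₀ (show (12:ℤ) ≠ 0 by norm_num)
      rw [ccoef_mul]
      rw [hv1, hv2]
      linear_combination (u1^3) * hi + (-u1^3*s^2 + u1^3*s^4) * hk12
        + (-k*s^2 + k*s^4 - 12*u1*u2*s^2 - u1^2*k*s^2 + u1^2*k*s^4) * hsq']
    rw [show (v1*s^2)*u3 + 2*(v1*B p + v2*(s^2)^2)*u1*u2
        + (v1*C p + 2*v2*s^2*(B p) + v3*(s^2)^3)*u1^3 = dcoef k d2 (p:ℕ) by
      apply mul_left_cancel₀ (show (360:ℤ) ≠ 0 by norm_num)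
      rw [dcoef_mul k d2 hd2even]
      rw [hv1, hv2, hv3]
      linear_combination (6*u1^4) * hii
        + (60*u1^2*u2 - 4*u1^4*b + u1^4*b*s^2 - 60*u1^4*u2*s^2) * hi
        + (-6*u1^4*s^2 + 6*u1^4*s^6) * hm
        + (-60*u1^2*u2*s^2 + 60*u1^2*u2*s^4 + 4*u1^4*b*s^2 - 5*u1^4*b*s^4 + u1^4*b*s^6
           + 60*u1^4*u2*s^2 - 60*u1^4*u2*s^6 + 4*u1^5*k*s^2 - 5*u1^5*k*s^4 + u1^5*k*s^6) * hk12
        + (-6*d2*s^2 + 6*d2*s^6 + 4*k^2*s^2 - 5*k^2*s^4 + k^2*s^6 - 360*u1*u3*s^2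
           - 6*u1^2*d2*s^2 + 6*u1^2*d2*s^6 + 4*u1^2*k^2*s^2 - 5*u1^2*k^2*s^4 + u1^2*k^2*s^6
           + 720*u1^2*u2^2*s^2 - 360*u1^3*u3*s^2 + 360*u1^3*u3*s^6 + 60*u1^3*u2*k*s^2
           - 60*u1^3*u2*k*s^4 + 4*u1^4*k^2*s^2 - 5*u1^4*k^2*s^4 + u1^4*k^2*s^6) * hsq']
  · -- ideal map
    rw [hσ, Ideal.map_span, Set.image_singleton, E_x]
    apply le_antisymm
    · rw [Ideal.span_le, Set.singleton_subset_iff]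
      exact ell_mem_span_x u1 u2 u3
    · rw [Ideal.span_le, Set.singleton_subset_iff, SetLike.mem_coe,
        Ideal.mem_span_singleton]
      refine ⟨E u1 u2 u3 ((v1 : TP 4) + (v2 : TP 4) * x + (v3 : TP 4) * x^2), ?_⟩
      rw [← E_x u1 u2 u3, ← map_mul, ← ell_eq_x_mul]
      rw [show ell v1 v2 v3 = E v1 v2 v3 x by rw [E_x]]
      rw [hEuv' x]
  · -- intertwine
    intro p
    rw [hσ]
    apply RingHom.ext
    intro a
    simp only [RingHom.comp_apply]
    show _ = E u1 u2 u3 (R.ψ p (E v1 v2 v3 (E u1 u2 u3 a)))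
    rw [hEvu' a]

end Work

theorem stmt11 :
    (∀ k d2 : ℤ, (k = 1 ∨ k = 5) → Even d2 → 0 ≤ d2 → d2 ≤ 58 →
      (∀ p : Nat.Primes, 2 < (p : ℕ) →
        (12 : ℤ) ∣ k * (((p : ℕ) : ℤ) ^ 2 * (((p : ℕ) : ℤ) ^ 2 - 1)) ∧
        (60 : ℤ) ∣ ((p : ℕ) : ℤ) ^ 2 * (((p : ℕ) : ℤ) ^ 4 - 1) * d2 ∧
        (360 : ℤ) ∣ k ^ 2 * ((p : ℕ) : ℤ) ^ 2 * (((p : ℕ) : ℤ) ^ 2 - 1) *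
          (((p : ℕ) : ℤ) ^ 2 - 4)) ∧
      ∃ S : AdamsFamily 4, SpecKD k d2 S) ∧
    (∀ k d2 k' d2' : ℤ, (k = 1 ∨ k = 5) → Even d2 → 0 ≤ d2 → d2 ≤ 58 →
      (k' = 1 ∨ k' = 5) → Even d2' → 0 ≤ d2' → d2' ≤ 58 →
      ∀ S S' : AdamsFamily 4, SpecKD k d2 S → SpecKD k' d2' S' →
        (k, d2) ≠ (k', d2') → ¬ AdamsIso S S') ∧
    (∀ R : AdamsFamily 4,
      (∀ p : Nat.Primes,
        R.ψ p (xx 4) - ((p : ℕ) : TP 4) ^ 2 * xx 4 ∈ Ideal.span {xx 4 ^ 2}) →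
      ∃ (k d2 : ℤ) (S : AdamsFamily 4), (k = 1 ∨ k = 5) ∧ Even d2 ∧ 0 ≤ d2 ∧ d2 ≤ 58 ∧
        SpecKD k d2 S ∧ AdamsIso R S) := by
  refine ⟨?_, ?_, ?_⟩
  · intro k d2 hk he h0 h58
    refine ⟨fun p hp => ⟨Work.dvd12' k _, Work.dvd60' _ _ he, Work.dvd360' k _⟩,
      Work.famS k d2 hk he, Work.famS_spec k d2 hk he⟩
  · exact Work.part2
  · exact Work.part3
end
end
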